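/- arXiv:2202.11662 — 3 statements merged into one kernel-verified Lean document; each statement's English description precedes it below -/
import Mathlib

section
/- Let α ∈ (0,2], C̄ ∈ [1,∞) and θ₀ ∈ [0,∞). If ψ* ∈ WUSC(α, θ₀, C̄), then for all λ ∈ (0,1] and all r > 0 with r < 1/θ₀ (all r > 0 if θ₀ = 0), one has h(λr) ≤ 16(1+2d) C̄ λ^{−α} h(r). -/
open MeasureTheory Real Filter Topology
open scoped ENNReal NNReal

noncomputable section

/-- Euclidean space `ℝ^d`. -/
abbrev Rd (d : ℕ) := EuclideanSpace ℝ (Fin d)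

/-- `ν` is a Lévy measure: `ν({0}) = 0` and `∫ min(1,|z|) ν(dz) < ∞`. -/
def LevyMeasure {d : ℕ} (ν : Measure (Rd d)) : Prop :=
  ν {0} = 0 ∧ (∫⁻ z, ENNReal.ofReal (min 1 ‖z‖) ∂ν) < ∞

/-- The symbol `ψ(ξ) = ∫ (1 - e^{i⟨ξ,z⟩}) ν(dz)`. -/
def psiSymb {d : ℕ} (ν : Measure (Rd d)) (ξ : Rd d) : ℂ :=
  ∫ z, (1 - Complex.exp (Complex.I * ((inner ℝ ξ z : ℝ) : ℂ))) ∂ν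

/-- `ψ*(r) = sup_{|ξ| ≤ r} Re ψ(ξ)`. -/
def psiStar {d : ℕ} (ν : Measure (Rd d)) (r : ℝ) : ℝ :=
  sSup {u | ∃ ξ : Rd d, ‖ξ‖ ≤ r ∧ u = (psiSymb ν ξ).re}

/-- The concentration function `h(r) = ∫ min(1, |x|²/r²) ν(dx)`. -/
def hFn {d : ℕ} (ν : Measure (Rd d)) (r : ℝ) : ℝ :=
  ∫ x, min 1 (‖x‖ ^ 2 / r ^ 2) ∂ν

/-- Weak upper scaling condition at infinity: `φ(λθ) ≤ C̄ λ^α φ(θ)` for `λ ≥ 1`, `θ > θ₀`. -/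
def WUSC (α θ₀ Cb : ℝ) (φ : ℝ → ℝ) : Prop :=
  ∀ lam ≥ (1 : ℝ), ∀ θ > θ₀, φ (lam * θ) ≤ Cb * lam ^ α * φ θ

/-- The set of Hölder quotients `|f x - f y| / |x - y|^β` over `0 < |x-y| ≤ 1`. -/
def holderSet {d : ℕ} (β : ℝ) (f : Rd d → ℝ) : Set ℝ :=
  {q | ∃ x y : Rd d, x ≠ y ∧ dist x y ≤ 1 ∧ q = |f x - f y| / dist x y ^ β}

/-- The Hölder seminorm `⦀f⦀_β`. -/
def holderSemi {d : ℕ} (β : ℝ) (f : Rd d → ℝ) : ℝ := sSup (holderSet β f)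

/-- The supremum norm `‖f‖_∞`. -/
def supNorm {d : ℕ} (f : Rd d → ℝ) : ℝ := ⨆ x, |f x|

/-- `f ∈ C₀^β`: continuous, vanishing at infinity, with finite Hölder seminorm. -/
def memC0beta {d : ℕ} (β : ℝ) (f : Rd d → ℝ) : Prop :=
  Continuous f ∧ Tendsto f (cocompact (Rd d)) (𝓝 0) ∧ BddAbove (holderSet β f)

/-- `‖f‖_β = ⦀f⦀_β + ‖f‖_∞`. -/
def holderNorm {d : ℕ} (β : ℝ) (f : Rd d → ℝ) : ℝ := holderSemi β f + supNorm f

/-- The generator `L f(x) = ∫ (f(x+y) - f(x)) ν(dy)`. -/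
def Lop {d : ℕ} (ν : Measure (Rd d)) (f : Rd d → ℝ) (x : Rd d) : ℝ :=
  ∫ y, (f (x + y) - f x) ∂ν

/-- The covariance function `g_Ω(y) = |Ω ∩ (Ω + y)|`. -/
def covFn {d : ℕ} (Ω : Set (Rd d)) (y : Rd d) : ℝ :=
  (volume (Ω ∩ ((fun z => z + y) '' Ω))).toReal

/-- The set of values `∫_Ω div φ` over `C¹` compactly supported `φ` with `‖φ‖_∞ ≤ 1`. -/
def perSet {d : ℕ} (Ω : Set (Rd d)) : Set ℝ :=
  {r | ∃ φ : Rd d → Rd d, ContDiff ℝ 1 φ ∧ HasCompactSupport φ ∧ (∀ x, ‖φ x‖ ≤ 1) ∧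
    r = ∫ x in Ω, (∑ i, fderiv ℝ φ x (EuclideanSpace.single i 1) i)}

/-- The classical perimeter `Per(Ω)`. -/
def per {d : ℕ} (Ω : Set (Rd d)) : ℝ := sSup (perSet Ω)

/-- The nonlocal perimeter `Per_ν(Ω) = ∫ (g_Ω(0) - g_Ω(y)) ν(dy)`. -/
def perNu {d : ℕ} (ν : Measure (Rd d)) (Ω : Set (Rd d)) : ℝ :=
  ∫ y, (covFn Ω 0 - covFn Ω y) ∂ν

/-- The heat content remainder `H(t) = ∫ (g_Ω(0) - g_Ω(y)) p_t(dy)`. -/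
def heatRem {d : ℕ} (Ω : Set (Rd d)) (p : ℝ → Measure (Rd d)) (t : ℝ) : ℝ :=
  ∫ y, (covFn Ω 0 - covFn Ω y) ∂(p t)

/-- The characteristic function of a measure `μ` on `ℝ^d`. -/
def charFn {d : ℕ} (μ : Measure (Rd d)) (ξ : Rd d) : ℂ :=
  ∫ x, Complex.exp (Complex.I * ((inner ℝ ξ x : ℝ) : ℂ)) ∂μ

/-- The isotropic `α`-stable Lévy measure `ν^{(α)}(dz) = A_{d,-α} |z|^{-d-α} dz`. -/
def stableLevy (d : ℕ) (α : ℝ) : Measure (Rd d) :=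
  volume.withDensity fun z => ENNReal.ofReal
    ((2 ^ α * Real.Gamma (((d : ℝ) + α) / 2) /
      (Real.pi ^ ((d : ℝ) / 2) * |Real.Gamma (-(α / 2))|)) * ‖z‖ ^ (-(d : ℝ) - α))

noncomputable def mySinc (t : ℝ) : ℝ := if t = 0 then 1 else Real.sin t / t

lemma mySinc_neg (t : ℝ) : mySinc (-t) = mySinc t := by
  unfold mySinc
  rcases eq_or_ne t 0 with h | h
  · simp [h]
  · rw [if_neg (neg_ne_zero.mpr h), if_neg h, Real.sin_neg, neg_div_neg_eq]

lemma measurable_mySinc : Measurable mySinc := by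
  unfold mySinc
  exact Measurable.ite (measurableSet_eq) measurable_const
    (Real.measurable_sin.div measurable_id)

lemma sin_one_le : Real.sin 1 ≤ 85/96 := by
  have h := Real.sin_bound (x := 1) (by norm_num)
  have := abs_le.1 h
  norm_num at this ⊢
  linarith [this.2]

lemma sin_le_sub_cube {u : ℝ} (h0 : 0 < u) (h1 : u ≤ 1) : Real.sin u ≤ u - u^3/14 := by
  have h := Real.sin_bound (x := u) (by rw [abs_of_pos h0]; exact h1)
  have habs := (abs_le.1 h).2
  have hu4 : |u|^4 ≤ u^3 := by
    rw [abs_of_pos h0]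
    calc u^4 = u^3 * u := by ring
    _ ≤ u^3 * 1 := mul_le_mul_of_nonneg_left h1 (pow_nonneg h0.le 3)
    _ = u^3 := by ring
  have hu5 : |u|^5 ≤ u^3 := by
    rw [abs_of_pos h0]
    calc u^5 = u^3 * u^2 := by ring
    _ ≤ u^3 * 1 := mul_le_mul_of_nonneg_left (by nlinarith) (pow_nonneg h0.le 3)
    _ = u^3 := by ring
  nlinarith [pow_pos h0 3]

lemma mySinc_le_one_sub {u : ℝ} : mySinc u ≤ 1 - min 1 (u^2) / 14 := by
  -- reduce to u ≥ 0
  wlog hu : 0 ≤ u with H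
  · have := H (u := -u) (by linarith [le_of_not_ge hu])
    rw [mySinc_neg] at this
    simpa using this
  rcases eq_or_lt_of_le hu with h0 | h0
  · simp [mySinc, ← h0]
  rcases le_or_gt u 1 with h1 | h1
  · have hs := sin_le_sub_cube h0 h1
    have hmin : min 1 (u^2) = u^2 := min_eq_right (by nlinarith)
    rw [mySinc, if_neg (ne_of_gt h0), hmin]
    rw [div_le_iff₀ h0]
    nlinarith [pow_pos h0 3]
  · have hmin : min 1 (u^2) = 1 := min_eq_left (by nlinarith)
    rw [mySinc, if_neg (ne_of_gt h0), hmin, div_le_iff₀ h0]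
    rcases le_or_gt (14/13 : ℝ) u with h2 | h2
    · have := Real.sin_le_one u
      nlinarith
    · -- 1 < u < 14/13 : sin u ≤ sin 1 + (u - 1)
      have hlip : Real.sin u - Real.sin 1 ≤ u - 1 := by
        have := Real.sin_sub_sin u 1
        have h3 : |Real.sin ((u-1)/2)| ≤ |(u-1)/2| := Real.abs_sin_le_abs
        have h4 : |Real.cos ((u+1)/2)| ≤ 1 := Real.abs_cos_le_one _
        calc Real.sin u - Real.sin 1 = 2 * Real.sin ((u-1)/2) * Real.cos ((u+1)/2) := this
        _ ≤ |2 * Real.sin ((u-1)/2) * Real.cos ((u+1)/2)| := le_abs_self _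
        _ = 2 * |Real.sin ((u-1)/2)| * |Real.cos ((u+1)/2)| := by
            rw [abs_mul, abs_mul]; norm_num
        _ ≤ 2 * |(u-1)/2| * 1 := by
            apply mul_le_mul _ h4 (abs_nonneg _) (by positivity)
            exact mul_le_mul_of_nonneg_left h3 (by norm_num)
        _ = u - 1 := by rw [abs_of_nonneg (by linarith)]; ring
      have := sin_one_le
      nlinarith

lemma one_sub_mySinc_nonneg (u : ℝ) : 0 ≤ 1 - mySinc u := by
  have := mySinc_le_one_sub (u := u)
  have : min 1 (u^2) ≥ 0 := le_min (by norm_num) (sq_nonneg u)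
  linarith [mySinc_le_one_sub (u := u)]

lemma sum_min_ge {d : ℕ} (u : Fin d → ℝ) :
    min 1 (∑ j, (u j)^2) ≤ ∑ j, min 1 ((u j)^2) := by
  by_cases h : ∀ j, (u j)^2 ≤ 1
  · have : ∑ j, min 1 ((u j)^2) = ∑ j, (u j)^2 :=
      Finset.sum_congr rfl fun j _ => min_eq_right (h j)
    rw [this]; exact min_le_right _ _
  · push_neg at h
    obtain ⟨j, hj⟩ := h
    calc min 1 (∑ j, (u j)^2) ≤ 1 := min_le_left _ _
    _ = min 1 ((u j)^2) := (min_eq_left hj.le).symm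
    _ ≤ ∑ j, min 1 ((u j)^2) := Finset.single_le_sum
        (f := fun i => min 1 ((u i)^2))
        (fun i _ => le_min (by norm_num) (sq_nonneg _)) (Finset.mem_univ j)

lemma one_sub_cos_le (t : ℝ) : 1 - Real.cos t ≤ 2 * min 1 (t^2) := by
  rcases le_or_gt (t^2) 1 with h | h
  · rw [min_eq_right h]
    have := Real.one_sub_sq_div_two_le_cos (x := t)
    nlinarith
  · rw [min_eq_left h.le]
    have := Real.neg_one_le_cos t
    linarith

lemma one_sub_cos_nonneg (t : ℝ) : 0 ≤ 1 - Real.cos t := by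
  linarith [Real.cos_le_one t]

lemma min_one_mul_le (A B : ℝ) (hB : 0 ≤ B) : min 1 (A*B) ≤ max 1 A * min 1 B := by
  rcases le_or_gt B 1 with h | h
  · rw [min_eq_right h]
    calc min 1 (A*B) ≤ A*B := min_le_right _ _
    _ ≤ max 1 A * B := mul_le_mul_of_nonneg_right (le_max_right _ _) hB
  · rw [min_eq_left h.le, mul_one]
    exact le_trans (min_le_left _ _) (le_max_left _ _)

lemma min_sq_le_min (x : ℝ) (hx : 0 ≤ x) : min 1 (x^2) ≤ min 1 x := by
  rcases le_or_gt x 1 with h | h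
  · rw [min_eq_right h]
    exact le_trans (min_le_right _ _) (by nlinarith)
  · rw [min_eq_left h.le]; exact min_le_left _ _

lemma norm_one_sub_exp_le (t : ℝ) : ‖1 - Complex.exp (Complex.I * t)‖ ≤ 2 * min 1 |t| := by
  have hre : (1 - Complex.exp (Complex.I * t)).re = 1 - Real.cos t := by
    rw [mul_comm]
    simp [Complex.sub_re, Complex.exp_ofReal_mul_I_re]
  have him : (1 - Complex.exp (Complex.I * t)).im = - Real.sin t := by
    rw [mul_comm]
    simp [Complex.sub_im, Complex.exp_ofReal_mul_I_im]
  have hsq : ‖1 - Complex.exp (Complex.I * t)‖^2 = 2 * (1 - Real.cos t) := by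
    rw [Complex.sq_norm, Complex.normSq_apply, hre, him]
    nlinarith [Real.sin_sq_add_cos_sq t]
  have h1 : ‖1 - Complex.exp (Complex.I * t)‖^2 ≤ (2 * min 1 |t|)^2 := by
    rw [hsq]
    have := one_sub_cos_le t
    have hmm : min 1 (t^2) = (min 1 |t|)^2 := by
      rcases le_or_gt |t| 1 with h | h
      · rw [min_eq_right h, min_eq_right (by nlinarith [sq_abs t, abs_nonneg t] : t^2 ≤ 1), sq_abs]
      · rw [min_eq_left h.le, min_eq_left (by nlinarith [sq_abs t, abs_nonneg t] : (1:ℝ) ≤ t^2), one_pow]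
    have hnn : 0 ≤ min 1 |t| := le_min one_pos.le (abs_nonneg t)
    nlinarith [le_min one_pos.le (sq_nonneg t)]
  have hnn : 0 ≤ 2 * min 1 |t| := by positivity
  exact le_of_pow_le_pow_left₀ two_ne_zero hnn h1

section Levy
variable {d : ℕ} {ν : Measure (Rd d)}

lemma levy_sigmaFinite (hν : LevyMeasure ν) : SigmaFinite ν := by
  refine ⟨⟨⟨fun n => {z | 1/(n+1 : ℝ) ≤ ‖z‖} ∪ {0}, fun _ => trivial, ?_, ?_⟩⟩⟩
  · intro n
    set c : ℝ := 1/(n+1 : ℝ) with hc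
    have hcpos : 0 < c := by positivity
    have hSm : MeasurableSet {z : Rd d | c ≤ ‖z‖} :=
      (isClosed_le continuous_const continuous_norm).measurableSet
    have hkey : ENNReal.ofReal (min 1 c) * ν {z | c ≤ ‖z‖} ≤
        ∫⁻ z, ENNReal.ofReal (min 1 ‖z‖) ∂ν := by
      calc ENNReal.ofReal (min 1 c) * ν {z | c ≤ ‖z‖}
          = ∫⁻ _ in {z | c ≤ ‖z‖}, ENNReal.ofReal (min 1 c) ∂ν := by
            rw [setLIntegral_const, mul_comm]
      _ ≤ ∫⁻ z in {z | c ≤ ‖z‖}, ENNReal.ofReal (min 1 ‖z‖) ∂ν := by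
            refine setLIntegral_mono' hSm fun z hz => ?_
            exact ENNReal.ofReal_le_ofReal (min_le_min le_rfl hz)
      _ ≤ ∫⁻ z, ENNReal.ofReal (min 1 ‖z‖) ∂ν := setLIntegral_le_lintegral _ _
    have hfin : ν {z : Rd d | c ≤ ‖z‖} < ∞ := by
      by_contra h
      push_neg at h
      rw [top_le_iff.mp h, ENNReal.mul_top] at hkey
      · exact absurd (lt_of_le_of_lt hkey hν.2) (lt_irrefl _)
      · simp only [ne_eq, ENNReal.ofReal_eq_zero, not_le]
        exact lt_min one_pos hcpos
    calc ν ({z | c ≤ ‖z‖} ∪ {0}) ≤ ν {z | c ≤ ‖z‖} + ν {0} := measure_union_le _ _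
    _ = ν {z | c ≤ ‖z‖} := by rw [hν.1, add_zero]
    _ < ∞ := hfin
  · ext z
    simp only [Set.mem_iUnion, Set.mem_union, Set.mem_setOf_eq, Set.mem_singleton_iff,
      Set.mem_univ, iff_true]
    rcases eq_or_ne z 0 with h | h
    · exact ⟨0, Or.inr h⟩
    · obtain ⟨n, hn⟩ := exists_nat_one_div_lt (norm_pos_iff.mpr h)
      exact ⟨n, Or.inl (by push_cast; exact hn.le)⟩

lemma integrable_min_one_norm (hν : LevyMeasure ν) :
    Integrable (fun z : Rd d => min 1 ‖z‖) ν := by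
  refine ⟨(continuous_const.min continuous_norm).aestronglyMeasurable, ?_⟩
  rw [hasFiniteIntegral_iff_ofReal (ae_of_all _ fun z => le_min one_pos.le (norm_nonneg z))]
  exact hν.2

lemma integrable_of_min_bound (hν : LevyMeasure ν) {E : Type*} [NormedAddCommGroup E]
    {f : Rd d → E} (hm : AEStronglyMeasurable f ν) (C : ℝ)
    (hb : ∀ z, ‖f z‖ ≤ C * min 1 ‖z‖) : Integrable f ν :=
  ((integrable_min_one_norm hν).const_mul C).mono' hm (ae_of_all _ hb)

end Levy

section Psi
variable {d : ℕ} {ν : Measure (Rd d)}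

lemma integrable_one_sub_exp (hν : LevyMeasure ν) (ξ : Rd d) :
    Integrable (fun z : Rd d => 1 - Complex.exp (Complex.I * ((inner ℝ ξ z : ℝ) : ℂ))) ν := by
  refine integrable_of_min_bound hν ?_ (2 * max 1 ‖ξ‖) fun z => ?_
  · apply Continuous.aestronglyMeasurable
    exact continuous_const.sub ((continuous_const.mul
      (Complex.continuous_ofReal.comp (continuous_const.inner continuous_id))).cexp)
  · calc ‖1 - Complex.exp (Complex.I * ((inner ℝ ξ z : ℝ) : ℂ))‖
        ≤ 2 * min 1 |(inner ℝ ξ z : ℝ)| := norm_one_sub_exp_le _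
    _ ≤ 2 * (max 1 ‖ξ‖ * min 1 ‖z‖) := by
        refine mul_le_mul_of_nonneg_left ?_ (by norm_num)
        calc min 1 |(inner ℝ ξ z : ℝ)| ≤ min 1 (‖ξ‖ * ‖z‖) :=
            min_le_min le_rfl (abs_real_inner_le_norm ξ z)
        _ ≤ max 1 ‖ξ‖ * min 1 ‖z‖ := min_one_mul_le _ _ (norm_nonneg z)
    _ = 2 * max 1 ‖ξ‖ * min 1 ‖z‖ := by ring

lemma integrable_one_sub_cos (hν : LevyMeasure ν) (ξ : Rd d) :
    Integrable (fun z : Rd d => 1 - Real.cos (inner ℝ ξ z : ℝ)) ν := by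
  refine integrable_of_min_bound hν ?_ (2 * max 1 (‖ξ‖^2)) fun z => ?_
  · exact (continuous_const.sub
      (Real.continuous_cos.comp (continuous_const.inner continuous_id))).aestronglyMeasurable
  · rw [Real.norm_eq_abs, abs_of_nonneg (one_sub_cos_nonneg _)]
    calc 1 - Real.cos (inner ℝ ξ z : ℝ) ≤ 2 * min 1 ((inner ℝ ξ z : ℝ)^2) := one_sub_cos_le _
    _ ≤ 2 * (max 1 (‖ξ‖^2) * min 1 (‖z‖^2)) := by
        refine mul_le_mul_of_nonneg_left ?_ (by norm_num)
        calc min 1 ((inner ℝ ξ z : ℝ)^2) ≤ min 1 (‖ξ‖^2 * ‖z‖^2) := by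
              refine min_le_min le_rfl ?_
              have h := abs_real_inner_le_norm ξ z
              nlinarith [abs_nonneg (inner ℝ ξ z : ℝ), sq_abs (inner ℝ ξ z : ℝ),
                norm_nonneg ξ, norm_nonneg z]
        _ ≤ max 1 (‖ξ‖^2) * min 1 (‖z‖^2) := min_one_mul_le _ _ (sq_nonneg _)
    _ ≤ 2 * (max 1 (‖ξ‖^2) * min 1 ‖z‖) := by
        refine mul_le_mul_of_nonneg_left (mul_le_mul_of_nonneg_left ?_ ?_) (by norm_num)
        · exact min_sq_le_min _ (norm_nonneg z)
        · exact le_trans one_pos.le (le_max_left _ _)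
    _ = 2 * max 1 (‖ξ‖^2) * min 1 ‖z‖ := by ring

lemma psiSymb_re (hν : LevyMeasure ν) (ξ : Rd d) :
    (psiSymb ν ξ).re = ∫ z, (1 - Real.cos (inner ℝ ξ z : ℝ)) ∂ν := by
  rw [psiSymb]
  rw [show (∫ z, (1 - Complex.exp (Complex.I * ((inner ℝ ξ z : ℝ) : ℂ))) ∂ν).re
      = RCLike.re (∫ z, (1 - Complex.exp (Complex.I * ((inner ℝ ξ z : ℝ) : ℂ))) ∂ν) from rfl,
    ← integral_re (integrable_one_sub_exp hν ξ)]
  congr 1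
  ext z
  rw [mul_comm, RCLike.re_to_complex, Complex.sub_re, Complex.one_re,
    Complex.exp_ofReal_mul_I_re]

lemma hFn_nonneg (r : ℝ) : 0 ≤ hFn ν r :=
  integral_nonneg fun z => le_min one_pos.le (by positivity)

lemma integrable_min_sq (hν : LevyMeasure ν) {r : ℝ} (hr : 0 < r) :
    Integrable (fun z : Rd d => min 1 (‖z‖^2 / r^2)) ν := by
  refine integrable_of_min_bound hν ?_ (max 1 (1/r^2)) fun z => ?_
  · exact (continuous_const.min
      ((continuous_norm.pow 2).div_const _)).aestronglyMeasurable
  · rw [Real.norm_eq_abs, abs_of_nonneg (le_min one_pos.le (by positivity))]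
    calc min 1 (‖z‖^2 / r^2) = min 1 ((1/r^2) * ‖z‖^2) := by rw [one_div, inv_mul_eq_div]
    _ ≤ max 1 (1/r^2) * min 1 (‖z‖^2) := min_one_mul_le _ _ (sq_nonneg _)
    _ ≤ max 1 (1/r^2) * min 1 ‖z‖ := by
        refine mul_le_mul_of_nonneg_left (min_sq_le_min _ (norm_nonneg z)) ?_
        exact le_trans one_pos.le (le_max_left _ _)

lemma psiRe_le (hν : LevyMeasure ν) {r : ℝ} (hr : 0 < r) {ξ : Rd d} (hξ : ‖ξ‖ ≤ r) :
    (psiSymb ν ξ).re ≤ 2 * hFn ν (1/r) := by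
  rw [psiSymb_re hν ξ, hFn, ← integral_const_mul]
  refine integral_mono (integrable_one_sub_cos hν ξ)
    ((integrable_min_sq hν (by positivity)).const_mul 2) fun z => ?_
  calc 1 - Real.cos (inner ℝ ξ z : ℝ) ≤ 2 * min 1 ((inner ℝ ξ z : ℝ)^2) := one_sub_cos_le _
  _ ≤ 2 * min 1 (‖z‖^2 / (1/r)^2) := by
      refine mul_le_mul_of_nonneg_left (min_le_min le_rfl ?_) (by norm_num)
      have h := abs_real_inner_le_norm ξ z
      have h2 : (inner ℝ ξ z : ℝ)^2 ≤ ‖ξ‖^2 * ‖z‖^2 := by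
        nlinarith [abs_nonneg (inner ℝ ξ z : ℝ), sq_abs (inner ℝ ξ z : ℝ),
          norm_nonneg ξ, norm_nonneg z]
      have h3 : ‖ξ‖^2 * ‖z‖^2 ≤ r^2 * ‖z‖^2 := by
        refine mul_le_mul_of_nonneg_right ?_ (sq_nonneg _)
        nlinarith [norm_nonneg ξ]
      have h4 : ‖z‖^2 / (1/r)^2 = r^2 * ‖z‖^2 := by
        field_simp
      linarith

lemma psiStar_bddAbove (hν : LevyMeasure ν) {r : ℝ} (hr : 0 < r) :
    BddAbove {u | ∃ ξ : Rd d, ‖ξ‖ ≤ r ∧ u = (psiSymb ν ξ).re} := by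
  refine ⟨2 * hFn ν (1/r), fun u hu => ?_⟩
  obtain ⟨ξ, hξ, rfl⟩ := hu
  exact psiRe_le hν hr hξ

lemma psiSymb_zero : psiSymb ν (0 : Rd d) = 0 := by
  rw [psiSymb]
  have : ∀ z : Rd d, (1 : ℂ) - Complex.exp (Complex.I * ((inner ℝ (0 : Rd d) z : ℝ) : ℂ)) = 0 := by
    intro z
    simp [inner_zero_left]
  simp only [this, integral_zero]

lemma zero_mem_psiSet {r : ℝ} (hr : 0 ≤ r) :
    (0 : ℝ) ∈ {u | ∃ ξ : Rd d, ‖ξ‖ ≤ r ∧ u = (psiSymb ν ξ).re} :=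
  ⟨0, by simpa using hr, by rw [psiSymb_zero]; simp⟩

lemma psiStar_nonneg (hν : LevyMeasure ν) {r : ℝ} (hr : 0 < r) : 0 ≤ psiStar ν r :=
  le_csSup (psiStar_bddAbove hν hr) (zero_mem_psiSet hr.le)

lemma psiStar_le (hν : LevyMeasure ν) {r : ℝ} (hr : 0 < r) :
    psiStar ν r ≤ 2 * hFn ν (1/r) := by
  refine Real.sSup_le (fun u hu => ?_) (by linarith [hFn_nonneg (ν := ν) (1/r)])
  obtain ⟨ξ, hξ, rfl⟩ := hu
  exact psiRe_le hν hr hξ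

lemma le_psiStar (hν : LevyMeasure ν) {r : ℝ} (hr : 0 < r) {ξ : Rd d} (hξ : ‖ξ‖ ≤ r) :
    (psiSymb ν ξ).re ≤ psiStar ν r :=
  le_csSup (psiStar_bddAbove hν hr) ⟨ξ, hξ, rfl⟩

end Psi

section OneD

lemma integral_cos_Icc (a c : ℝ) (ha : 0 < a) :
    ∫ τ in Set.Icc (-a) a, Real.cos (τ * c) = 2 * a * mySinc (a * c) := by
  rw [integral_Icc_eq_integral_Ioc, ← intervalIntegral.integral_of_le (by linarith : -a ≤ a)]
  rcases eq_or_ne c 0 with hc | hc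
  · simp [hc, mySinc]
    ring
  · rw [intervalIntegral.integral_comp_mul_right Real.cos hc]
    rw [integral_cos]
    rw [mySinc, if_neg (by positivity : a * c ≠ 0)]
    rw [neg_mul, Real.sin_neg, smul_eq_mul]
    field_simp
    ring

lemma integral_one_sub_cos_Icc (a c : ℝ) (ha : 0 < a) :
    ∫ τ in Set.Icc (-a) a, (1 - Real.cos (τ * c)) = 2 * a * (1 - mySinc (a * c)) := by
  have h1 : IntegrableOn (fun _ : ℝ => (1:ℝ)) (Set.Icc (-a) a) volume :=
    integrableOn_const (by rw [Real.volume_Icc]; exact ENNReal.ofReal_ne_top)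
  have h2 : IntegrableOn (fun τ : ℝ => Real.cos (τ * c)) (Set.Icc (-a) a) volume :=
    (Real.continuous_cos.comp (continuous_mul_right c)).integrableOn_Icc
  rw [integral_sub h1 h2, integral_cos_Icc a c ha, setIntegral_const]
  rw [Real.volume_real_Icc, max_eq_left (by linarith), smul_eq_mul]
  ring

lemma lintegral_one_sub_cos_Icc (a c : ℝ) (ha : 0 < a) :
    ∫⁻ τ in Set.Icc (-a) a, ENNReal.ofReal (1 - Real.cos (τ * c)) =
      ENNReal.ofReal (2 * a * (1 - mySinc (a * c))) := by
  rw [← integral_one_sub_cos_Icc a c ha]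
  rw [← ofReal_integral_eq_lintegral_ofReal]
  · have h1 : IntegrableOn (fun _ : ℝ => (1:ℝ)) (Set.Icc (-a) a) volume :=
      integrableOn_const (by rw [Real.volume_Icc]; exact ENNReal.ofReal_ne_top)
    have h2 : IntegrableOn (fun τ : ℝ => Real.cos (τ * c)) (Set.Icc (-a) a) volume :=
      (Real.continuous_cos.comp (continuous_mul_right c)).integrableOn_Icc
    exact h1.sub h2
  · exact ae_of_all _ fun τ => one_sub_cos_nonneg _

end OneD

section Main
variable {d : ℕ} {ν : Measure (Rd d)}

lemma measurable_proj' (j : Fin d) : Measurable (fun x : Rd d => x j) :=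
  (EuclideanSpace.proj (𝕜 := ℝ) j).continuous.measurable

lemma continuous_proj' (j : Fin d) : Continuous (fun x : Rd d => x j) :=
  (EuclideanSpace.proj (𝕜 := ℝ) j).continuous

lemma norm_sq_eq_sum (x : Rd d) : ‖x‖^2 = ∑ j, (x j)^2 := by
  rw [EuclideanSpace.norm_eq, Real.sq_sqrt (Finset.sum_nonneg fun j _ => sq_nonneg _)]
  simp [sq_abs]

lemma inner_single_eq (j : Fin d) (τ : ℝ) (x : Rd d) :
    (inner ℝ (EuclideanSpace.single j τ) x : ℝ) = τ * x j := by
  rw [EuclideanSpace.inner_single_left]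
  simp

lemma hFn_le_psiStar (hν : LevyMeasure ν) {s : ℝ} (hs : 0 < s) :
    hFn ν s ≤ 14 * d * psiStar ν (1/s) := by
  haveI : SigmaFinite ν := levy_sigmaFinite hν
  set a := 1/s with ha
  have hapos : 0 < a := by positivity
  -- pointwise inequality
  have hpt : ∀ x : Rd d, min 1 (‖x‖^2/s^2) ≤ ∑ j, 14 * (1 - mySinc (a * x j)) := by
    intro x
    have h1 : ∑ j, (a * x j)^2 = ‖x‖^2 / s^2 := by
      rw [norm_sq_eq_sum, Finset.sum_div]
      refine Finset.sum_congr rfl fun j _ => ?_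
      rw [ha]; field_simp
    calc min 1 (‖x‖^2/s^2) = min 1 (∑ j, (a * x j)^2) := by rw [h1]
    _ ≤ ∑ j, min 1 ((a * x j)^2) := sum_min_ge _
    _ ≤ ∑ j, 14 * (1 - mySinc (a * x j)) := by
        refine Finset.sum_le_sum fun j _ => ?_
        have := mySinc_le_one_sub (u := a * x j)
        linarith
  -- measurability helpers
  have hmcos : ∀ j : Fin d, Measurable (Function.uncurry fun (x : Rd d) (τ : ℝ) =>
      ENNReal.ofReal (1 - Real.cos (τ * x j))) := by
    intro j
    apply ENNReal.measurable_ofReal.comp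
    apply Continuous.measurable
    exact continuous_const.sub (Real.continuous_cos.comp
      (continuous_snd.mul ((continuous_proj' j).comp continuous_fst)))
  have hminner : ∀ (j : Fin d), Measurable
      (fun x : Rd d => ∫⁻ τ in Set.Icc (-a) a, ENNReal.ofReal (1 - Real.cos (τ * x j))) := by
    intro j
    exact Measurable.lintegral_prod_right (hmcos j)
  -- main ENNReal chain
  have key : ENNReal.ofReal (hFn ν s) ≤ ENNReal.ofReal (14 * d * psiStar ν (1/s)) := by
    calc ENNReal.ofReal (hFn ν s)
        = ∫⁻ x, ENNReal.ofReal (min 1 (‖x‖^2/s^2)) ∂ν := by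
          rw [hFn]
          exact ofReal_integral_eq_lintegral_ofReal (integrable_min_sq hν hs)
            (ae_of_all _ fun z => le_min one_pos.le (by positivity))
    _ ≤ ∫⁻ x, ∑ j, ENNReal.ofReal (14 * (1 - mySinc (a * x j))) ∂ν := by
          refine lintegral_mono fun x => ?_
          calc ENNReal.ofReal (min 1 (‖x‖^2/s^2))
              ≤ ENNReal.ofReal (∑ j, 14 * (1 - mySinc (a * x j))) :=
                ENNReal.ofReal_le_ofReal (hpt x)
          _ = ∑ j, ENNReal.ofReal (14 * (1 - mySinc (a * x j))) :=
                ENNReal.ofReal_sum_of_nonneg fun j _ => by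
                  linarith [one_sub_mySinc_nonneg (a * x j)]
    _ = ∑ j, ∫⁻ x, ENNReal.ofReal (14 * (1 - mySinc (a * x j))) ∂ν := by
          refine lintegral_finset_sum _ fun j _ => ?_
          exact ENNReal.measurable_ofReal.comp
            ((measurable_const.sub (measurable_mySinc.comp
              ((measurable_proj' j).const_mul a))).const_mul 14)
    _ = ∑ j, ∫⁻ x, ENNReal.ofReal (7/a) *
          (∫⁻ τ in Set.Icc (-a) a, ENNReal.ofReal (1 - Real.cos (τ * x j))) ∂ν := by
          refine Finset.sum_congr rfl fun j _ => ?_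
          refine lintegral_congr fun x => ?_
          rw [lintegral_one_sub_cos_Icc a (x j) hapos,
            ← ENNReal.ofReal_mul (by positivity : (0:ℝ) ≤ 7/a)]
          congr 1
          field_simp
          ring
    _ = ∑ j, ENNReal.ofReal (7/a) *
          ∫⁻ x, (∫⁻ τ in Set.Icc (-a) a, ENNReal.ofReal (1 - Real.cos (τ * x j))) ∂ν := by
          exact Finset.sum_congr rfl fun j _ => lintegral_const_mul _ (hminner j)
    _ = ∑ j, ENNReal.ofReal (7/a) *
          ∫⁻ τ in Set.Icc (-a) a, (∫⁻ x, ENNReal.ofReal (1 - Real.cos (τ * x j)) ∂ν) := by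
          refine Finset.sum_congr rfl fun j _ => ?_
          congr 1
          exact lintegral_lintegral_swap (hmcos j).aemeasurable
    _ ≤ ∑ j, ENNReal.ofReal (7/a) *
          ∫⁻ _ in Set.Icc (-a) a, ENNReal.ofReal (psiStar ν (1/s)) := by
          refine Finset.sum_le_sum fun j _ => ?_
          refine mul_le_mul_right ?_ _
          refine lintegral_mono_ae ?_
          filter_upwards [ae_restrict_mem measurableSet_Icc] with τ hτ
          have hτa : |τ| ≤ a := abs_le.mpr ⟨hτ.1, hτ.2⟩
          have heq : ∫⁻ x, ENNReal.ofReal (1 - Real.cos (τ * x j)) ∂ν =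
              ENNReal.ofReal ((psiSymb ν (EuclideanSpace.single j τ)).re) := by
            rw [psiSymb_re hν]
            have hfun : (fun x : Rd d => 1 - Real.cos ((inner ℝ (EuclideanSpace.single j τ) x : ℝ)))
                = fun x : Rd d => 1 - Real.cos (τ * x j) := by
              funext x; rw [inner_single_eq]
            rw [hfun]
            rw [ofReal_integral_eq_lintegral_ofReal]
            · have := integrable_one_sub_cos hν (EuclideanSpace.single j τ)
              rwa [hfun] at this
            · exact ae_of_all _ fun x => one_sub_cos_nonneg _
          rw [heq]
          refine ENNReal.ofReal_le_ofReal ?_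
          refine le_psiStar hν (by positivity) ?_
          rw [EuclideanSpace.norm_single, Real.norm_eq_abs, ← ha]
          exact hτa
    _ = ENNReal.ofReal (14 * d * psiStar ν (1/s)) := by
          rw [lintegral_const, Measure.restrict_apply MeasurableSet.univ, Set.univ_inter,
            Real.volume_Icc]
          rw [Finset.sum_const, Finset.card_univ, Fintype.card_fin]
          have hψ : (0:ℝ) ≤ psiStar ν (1/s) := psiStar_nonneg hν (by positivity)
          have h2a : a - -a = 2*a := by ring
          rw [h2a, ← ENNReal.ofReal_mul hψ, ← ENNReal.ofReal_mul (by positivity : (0:ℝ) ≤ 7/a),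
            nsmul_eq_mul, ← ENNReal.ofReal_natCast d,
            ← ENNReal.ofReal_mul (by positivity : (0:ℝ) ≤ (d:ℝ))]
          congr 1
          field_simp
          ring
  rw [ENNReal.ofReal_le_ofReal_iff] at key
  · exact key
  · have := psiStar_nonneg hν (r := 1/s) (by positivity)
    positivity

end Main

/-- If `ψ* ∈ WUSC(α, θ₀, C̄)` then for all `λ ∈ (0,1]` and `r > 0` with
`θ₀ r < 1` (i.e. `r < 1/θ₀`, all `r > 0` if `θ₀ = 0`), `h(λr) ≤ 16(1+2d) C̄ λ^{-α} h(r)`. -/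
theorem stmt0 {d : ℕ} (hd : 1 ≤ d) (ν : Measure (Rd d)) (hν : LevyMeasure ν)
    (α Cb θ₀ : ℝ) (hα : α ∈ Set.Ioc (0 : ℝ) 2) (hCb : 1 ≤ Cb) (hθ₀ : 0 ≤ θ₀)
    (hpsi : WUSC α θ₀ Cb (psiStar ν)) :
    ∀ lam : ℝ, 0 < lam → lam ≤ 1 → ∀ r : ℝ, 0 < r → θ₀ * r < 1 →
      hFn ν (lam * r) ≤ 16 * (1 + 2 * (d : ℝ)) * Cb * lam ^ (-α) * hFn ν r := by
  intro lam hl0 hl1 r hr hθr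
  have hCb0 : (0:ℝ) ≤ Cb := by linarith
  have hlr : 0 < lam * r := mul_pos hl0 hr
  have h1 : hFn ν (lam*r) ≤ 14*d*psiStar ν (1/(lam*r)) := hFn_le_psiStar hν hlr
  have heq : (1:ℝ)/(lam*r) = (1/lam)*(1/r) := by
    field_simp
  have hlam1 : (1:ℝ) ≤ 1/lam := by
    rw [le_div_iff₀ hl0]; linarith
  have hθr' : θ₀ < 1/r := by
    rw [lt_div_iff₀ hr]; exact hθr
  have hw : psiStar ν ((1/lam)*(1/r)) ≤ Cb * (1/lam)^α * psiStar ν (1/r) :=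
    hpsi (1/lam) hlam1 (1/r) hθr'
  have h3 : psiStar ν (1/r) ≤ 2 * hFn ν r := by
    have := psiStar_le hν (r := 1/r) (by positivity)
    rwa [one_div_one_div] at this
  have hrp : (1/lam)^α = lam^(-α) := by
    rw [Real.rpow_neg hl0.le, one_div, Real.inv_rpow hl0.le]
  have hdn : (0:ℝ) ≤ (d:ℝ) := Nat.cast_nonneg d
  have hrpnn : (0:ℝ) ≤ lam^(-α) := Real.rpow_nonneg hl0.le _
  have hCl : (0:ℝ) ≤ Cb * (1/lam)^α := by
    rw [hrp]; exact mul_nonneg hCb0 hrpnn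
  calc hFn ν (lam*r) ≤ 14*d*psiStar ν (1/(lam*r)) := h1
  _ = 14*d*psiStar ν ((1/lam)*(1/r)) := by rw [heq]
  _ ≤ 14*d*(Cb * (1/lam)^α * psiStar ν (1/r)) := by
      refine mul_le_mul_of_nonneg_left hw (by positivity)
  _ ≤ 14*d*(Cb * (1/lam)^α * (2 * hFn ν r)) := by
      refine mul_le_mul_of_nonneg_left (mul_le_mul_of_nonneg_left h3 hCl) (by positivity)
  _ = 28*d*Cb*lam^(-α)*hFn ν r := by rw [hrp]; ring
  _ ≤ 16*(1+2*(d:ℝ))*Cb*lam^(-α)*hFn ν r := by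
      have hco : (28:ℝ)*d ≤ 16*(1+2*(d:ℝ)) := by nlinarith
      have hc : 0 ≤ Cb * lam^(-α) * hFn ν r :=
        mul_nonneg (mul_nonneg hCb0 hrpnn) (hFn_nonneg _)
      nlinarith [mul_le_mul_of_nonneg_right hco hc]
end
end

section
/- Let α ∈ (0,2], C > 0 and θ₀ ∈ [0,∞). If h(λr) ≤ C λ^{−α} h(r) for all λ ∈ (0,1] and all r > 0 with r < 1/θ₀ (all r > 0 if θ₀ = 0), then ψ* ∈ WUSC(α, θ₀, 16(1+2d) C), i.e. ψ*(λθ) ≤ 16(1+2d) C λ^α ψ*(θ) for all λ ≥ 1 and θ > θ₀. -/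
open MeasureTheory Real Filter Topology
open scoped ENNReal NNReal

noncomputable section

namespace Stmt1Aux

lemma sin_one_le_85 : Real.sin 1 ≤ 0.85 := by
  have h2 : (1 : ℝ) = 2 * (1/2) := by norm_num
  have habs : |(1:ℝ)/2| ≤ 1 := by rw [abs_of_nonneg] <;> norm_num
  have hs := Real.sin_bound habs
  have hc := Real.cos_bound habs
  have hs0 : 0 ≤ Real.sin (1/2) := Real.sin_nonneg_of_nonneg_of_le_pi (by norm_num)
    (by linarith [Real.pi_gt_three])
  have hc0 : 0 ≤ Real.cos (1/2) := Real.cos_nonneg_of_mem_Icc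
    (by constructor <;> [linarith [Real.pi_gt_three]; linarith [Real.pi_gt_three]])
  rw [h2, Real.sin_two_mul]
  rw [abs_of_pos (by norm_num : (0:ℝ) < 1/2)] at hs hc
  have hsu : Real.sin (1/2) ≤ 1/2 - (1/2)^3/6 + (1/2)^4 * (5/96) := by
    have := abs_le.1 hs; linarith [this.2]
  have hcu : Real.cos (1/2) ≤ 1 - (1/2)^2/2 + (1/2)^4 * (5/96) := by
    have := abs_le.1 hc; linarith [this.2]
  nlinarith [hs0, hc0, hsu, hcu]

lemma abs_sinc_le (x : ℝ) : |Real.sin x / x| ≤ Real.exp (-(min (x^2) 1)/9) := by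
  have key : ∀ y : ℝ, 0 ≤ y → |Real.sin y / y| ≤ Real.exp (-(min (y^2) 1)/9) := by
    intro y hy
    rcases eq_or_lt_of_le hy with h0 | hypos
    · simp [← h0]
    rcases le_or_gt y 1 with h1 | h1
    · -- small case
      have hmin : min (y^2) 1 = y^2 := min_eq_left (by nlinarith)
      rw [hmin]
      have hsin0 : 0 ≤ Real.sin y := Real.sin_nonneg_of_nonneg_of_le_pi hy
        (by linarith [Real.pi_gt_three])
      rw [abs_of_nonneg (by positivity)]
      have hb := Real.sin_bound (x := y) (by rwa [abs_of_nonneg hy])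
      rw [abs_of_nonneg hy] at hb
      have hup : Real.sin y ≤ y - y^3/6 + y^4 * (5/96) := by
        have := abs_le.1 hb
        have hy54 : y^5 ≤ y^4 := pow_le_pow_of_le_one hy h1 (by norm_num)
        nlinarith [this.2, pow_nonneg hy 4]
      have hy43 : y^4 ≤ y^3 := pow_le_pow_of_le_one hy h1 (by norm_num)
      have hup2 : Real.sin y ≤ y - y^3/9 := by nlinarith
      have hq : Real.sin y / y ≤ 1 - y^2/9 := by
        rw [div_le_iff₀ hypos]; nlinarith
      have he : 1 - y^2/9 ≤ Real.exp (-(y^2)/9) := by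
        have := Real.add_one_le_exp (-(y^2)/9); linarith
      linarith
    · -- large case
      have hmin : min (y^2) 1 = 1 := min_eq_right (by nlinarith)
      rw [hmin]
      have he : (8:ℝ)/9 ≤ Real.exp (-1/9) := by
        have := Real.add_one_le_exp (-1/9 : ℝ); linarith
      have hmain : |Real.sin y / y| ≤ 8/9 := by
        rcases le_or_gt (9/8 : ℝ) y with h98 | h98
        · rw [abs_div, abs_of_pos hypos, div_le_iff₀ hypos]
          nlinarith [Real.abs_sin_le_one y]
        · have hsin0 : 0 ≤ Real.sin y := Real.sin_nonneg_of_nonneg_of_le_pi hy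
            (by linarith [Real.pi_gt_three])
          rw [abs_of_nonneg (by positivity)]
          have hd : Real.sin y - Real.sin 1 = 2 * Real.sin ((y-1)/2) * Real.cos ((y+1)/2) :=
            Real.sin_sub_sin y 1
          have hs2 : Real.sin ((y-1)/2) ≤ (y-1)/2 := Real.sin_le (by linarith)
          have hs2' : 0 ≤ Real.sin ((y-1)/2) := Real.sin_nonneg_of_nonneg_of_le_pi
            (by linarith) (by linarith [Real.pi_gt_three])
          have hc2 : Real.cos ((y+1)/2) ≤ 1 := Real.cos_le_one _
          have hc2' : -1 ≤ Real.cos ((y+1)/2) := Real.neg_one_le_cos _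
          have hkey : Real.sin y ≤ Real.sin 1 + (y - 1) := by nlinarith
          have h85 := sin_one_le_85
          rw [div_le_iff₀ hypos]
          nlinarith
      linarith [hmain, he]
  rcases le_or_gt 0 x with hx | hx
  · exact key x hx
  · have := key (-x) (by linarith)
    rw [Real.sin_neg] at this
    simpa [neg_div_neg_eq, neg_pow] using this


noncomputable def lineVal (a c : ℝ) : ℝ := if c = 0 then 2*a else 2 * Real.sin (a*c) / c

lemma abs_lineVal_le {a : ℝ} (ha : 0 < a) (c : ℝ) :
    |lineVal a c| ≤ 2*a*Real.exp (-(min ((a*c)^2) 1)/9) := by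
  rw [lineVal]
  split_ifs with h
  · subst h
    simp only [mul_zero]
    rw [abs_of_pos (by linarith)]
    norm_num
  · have hc : c ≠ 0 := h
    have h1 : 2*Real.sin (a*c)/c = 2*a*(Real.sin (a*c)/(a*c)) := by
      field_simp
    rw [h1, abs_mul, abs_of_pos (by linarith : (0:ℝ) < 2*a)]
    exact mul_le_mul_of_nonneg_left (abs_sinc_le (a*c)) (by linarith)

lemma integral_Icc_cexp {a : ℝ} (ha : 0 < a) (c : ℝ) :
    ∫ t in Set.Icc (-a) a, Complex.exp (Complex.I * ((t * c : ℝ) : ℂ)) = ((lineVal a c : ℝ) : ℂ) := by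
  rcases eq_or_ne c 0 with rfl | hc
  · simp only [mul_zero, Complex.ofReal_zero, Complex.exp_zero, lineVal, if_pos rfl]
    rw [setIntegral_const, Measure.real, Real.volume_Icc]
    rw [show a - -a = 2*a by ring, ENNReal.toReal_ofReal (by linarith)]
    simp
  · rw [integral_Icc_eq_integral_Ioc, ← intervalIntegral.integral_of_le (by linarith : -a ≤ a)]
    have hrw : ∀ t : ℝ, Complex.I * ((t * c : ℝ) : ℂ) = (Complex.I * c) * (t : ℂ) := by
      intro t; push_cast; ring
    simp_rw [hrw]
    rw [integral_exp_mul_complex (by simp [Complex.I_ne_zero, hc] : Complex.I * (c:ℂ) ≠ 0)]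
    have e1 : Complex.I * (c:ℂ) * (a:ℂ) = ((c*a : ℝ):ℂ) * Complex.I := by push_cast; ring
    have e2 : Complex.I * (c:ℂ) * ((-a:ℝ):ℂ) = (-(c*a : ℝ):ℂ) * Complex.I := by push_cast; ring
    rw [e1, e2, Complex.exp_mul_I, Complex.exp_mul_I]
    rw [lineVal, if_neg hc]
    have hcc : (c:ℂ) ≠ 0 := Complex.ofReal_ne_zero.2 hc
    rw [show ((2 * Real.sin (a*c) / c : ℝ) : ℂ) = 2 * Complex.sin ((c*a:ℝ):ℂ) / (c:ℂ) by
      push_cast [Complex.ofReal_sin]; rw [mul_comm (a:ℂ) (c:ℂ)]]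
    rw [Complex.cos_neg, Complex.sin_neg]
    field_simp [Complex.I_ne_zero]
    ring

variable {d : ℕ} {ν : Measure (Rd d)}

lemma integrable_min_one_norm (hν : LevyMeasure ν) :
    Integrable (fun z : Rd d => min 1 ‖z‖) ν := by
  refine ⟨(continuous_const.min continuous_norm).aestronglyMeasurable, ?_⟩
  rw [hasFiniteIntegral_iff_ofReal (ae_of_all _ fun z => le_min zero_le_one (norm_nonneg z))]
  · exact hν.2

lemma levy_sigmaFinite (hν : LevyMeasure ν) : SigmaFinite ν := by
  refine ⟨⟨⟨fun n => {z : Rd d | (1:ℝ)/(n+1) < ‖z‖} ∪ {0}, fun _ => trivial, ?_, ?_⟩⟩⟩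
  · intro n
    have hle : ν ({z : Rd d | (1:ℝ)/(n+1) < ‖z‖} ∪ {0})
        ≤ ν {z : Rd d | (1:ℝ)/(n+1) < ‖z‖} + ν {0} := measure_union_le _ _
    rw [hν.1, add_zero] at hle
    refine lt_of_le_of_lt hle ?_
    set A : Set (Rd d) := {z : Rd d | (1:ℝ)/(n+1) < ‖z‖} with hA
    have hAm : MeasurableSet A := measurableSet_lt measurable_const continuous_norm.measurable
    have hc : (0:ℝ) < min 1 (1/((n:ℝ)+1)) := by positivity
    have h1 : ENNReal.ofReal (min 1 (1/((n:ℝ)+1))) * ν A = ∫⁻ z in A, ENNReal.ofReal (min 1 (1/((n:ℝ)+1))) ∂ν := by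
      rw [setLIntegral_const]
    have h2 : (∫⁻ z in A, ENNReal.ofReal (min 1 (1/((n:ℝ)+1))) ∂ν)
        ≤ ∫⁻ z in A, ENNReal.ofReal (min 1 ‖z‖) ∂ν := by
      refine setLIntegral_mono (by fun_prop) ?_
      intro z hz
      refine ENNReal.ofReal_le_ofReal (min_le_min le_rfl (le_of_lt hz))
    have h3 : (∫⁻ z in A, ENNReal.ofReal (min 1 ‖z‖) ∂ν) ≤ ∫⁻ z, ENNReal.ofReal (min 1 ‖z‖) ∂ν :=
      setLIntegral_le_lintegral _ _
    have h4 : ENNReal.ofReal (min 1 (1/((n:ℝ)+1))) * ν A < ∞ :=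
      h1 ▸ lt_of_le_of_lt (le_trans h2 h3) hν.2
    have h5 : ENNReal.ofReal (min 1 (1/((n:ℝ)+1))) ≠ 0 := by
      rw [ne_eq, ENNReal.ofReal_eq_zero, not_le]
      exact hc
    by_contra h
    rw [not_lt, top_le_iff] at h
    rw [h, ENNReal.mul_top h5] at h4
    exact absurd h4 (by simp)
  · rw [Set.eq_univ_iff_forall]
    intro z
    rcases eq_or_ne z 0 with rfl | hz
    · exact Set.mem_iUnion.2 ⟨0, Or.inr rfl⟩
    · have : (0:ℝ) < ‖z‖ := norm_pos_iff.2 hz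
      obtain ⟨n, hn⟩ := exists_nat_one_div_lt this
      exact Set.mem_iUnion.2 ⟨n, Or.inl (by exact_mod_cast hn)⟩

lemma integrable_hInt (hν : LevyMeasure ν) {s : ℝ} (hs : 0 < s) :
    Integrable (fun z : Rd d => min 1 (‖z‖^2 / s^2)) ν := by
  refine Integrable.mono' (((integrable_min_one_norm hν).const_mul (max 1 (1/s^2))))
    ((continuous_const.min ((continuous_norm.pow 2).div_const _)).aestronglyMeasurable)
    (ae_of_all _ fun z => ?_)
  have h0 : (0:ℝ) ≤ min 1 (‖z‖^2/s^2) := le_min zero_le_one (by positivity)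
  rw [Real.norm_eq_abs, abs_of_nonneg h0]
  rcases le_total (1:ℝ) ‖z‖ with h1 | h1
  · have : min 1 (‖z‖^2/s^2) ≤ 1 := min_le_left _ _
    have h2 : min (1:ℝ) ‖z‖ = 1 := min_eq_left h1
    rw [h2]
    nlinarith [le_max_left (1:ℝ) (1/s^2)]
  · have h2 : min (1:ℝ) ‖z‖ = ‖z‖ := min_eq_right h1
    rw [h2]
    have : min 1 (‖z‖^2/s^2) ≤ ‖z‖^2/s^2 := min_le_right _ _
    have hz2 : ‖z‖^2 ≤ ‖z‖ := by nlinarith [norm_nonneg z]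
    have : min 1 (‖z‖^2/s^2) ≤ ‖z‖ * (1/s^2) := by
      refine le_trans this ?_
      rw [div_eq_mul_one_div]
      exact mul_le_mul_of_nonneg_right hz2 (by positivity)
    nlinarith [norm_nonneg z, le_max_right (1:ℝ) (1/s^2), this]

lemma one_sub_cos_le_min2 (t : ℝ) : 1 - Real.cos t ≤ min 2 |t| := by
  rcases le_total |t| 2 with h | h
  · have h1 : 1 - t^2/2 ≤ Real.cos t := Real.one_sub_sq_div_two_le_cos
    have : t^2 = |t|^2 := (sq_abs t).symm
    refine le_min ?_ ?_
    · nlinarith [Real.neg_one_le_cos t]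
    · nlinarith [abs_nonneg t]
  · refine le_min (by nlinarith [Real.neg_one_le_cos t]) (by nlinarith [Real.neg_one_le_cos t])

lemma one_sub_cos_le_two_min (t : ℝ) : 1 - Real.cos t ≤ 2 * min 1 (t^2) := by
  rcases le_total (t^2) 1 with h | h
  · have h1 : 1 - t^2/2 ≤ Real.cos t := Real.one_sub_sq_div_two_le_cos
    rw [min_eq_right h]; nlinarith
  · rw [min_eq_left h]; nlinarith [Real.neg_one_le_cos t]

lemma abs_one_sub_cos_inner_le {R : ℝ} (hR : 0 ≤ R) (ξ z : Rd d) (hξ : ‖ξ‖ ≤ R) :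
    |1 - Real.cos (inner ℝ ξ z : ℝ)| ≤ (2 + R) * min 1 ‖z‖ := by
  have h0 : 0 ≤ 1 - Real.cos (inner ℝ ξ z : ℝ) := by linarith [Real.cos_le_one (inner ℝ ξ z : ℝ)]
  rw [abs_of_nonneg h0]
  have h1 := one_sub_cos_le_min2 (inner ℝ ξ z : ℝ)
  have h2 : |(inner ℝ ξ z : ℝ)| ≤ ‖ξ‖ * ‖z‖ := abs_real_inner_le_norm ξ z
  rcases le_total (1:ℝ) ‖z‖ with hz | hz
  · rw [min_eq_left hz]
    have : 1 - Real.cos (inner ℝ ξ z : ℝ) ≤ 2 := le_trans h1 (min_le_left _ _)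
    nlinarith
  · rw [min_eq_right hz]
    have h3 : 1 - Real.cos (inner ℝ ξ z : ℝ) ≤ ‖ξ‖ * ‖z‖ :=
      le_trans h1 (le_trans (min_le_right _ _) h2)
    nlinarith [norm_nonneg z, norm_nonneg ξ]

lemma integrable_one_sub_cos (hν : LevyMeasure ν) (ξ : Rd d) :
    Integrable (fun z : Rd d => 1 - Real.cos (inner ℝ ξ z : ℝ)) ν := by
  refine Integrable.mono' ((integrable_min_one_norm hν).const_mul (2 + ‖ξ‖))
    ?_ (ae_of_all _ fun z => ?_)
  · exact (continuous_const.sub (Real.continuous_cos.comp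
      ((continuous_inner (𝕜 := ℝ)).comp (Continuous.prodMk_right ξ)))).aestronglyMeasurable
  · exact abs_one_sub_cos_inner_le (norm_nonneg ξ) ξ z le_rfl

lemma integrable_one_sub_cexp (hν : LevyMeasure ν) (ξ : Rd d) :
    Integrable (fun z : Rd d => 1 - Complex.exp (Complex.I * ((inner ℝ ξ z : ℝ) : ℂ))) ν := by
  refine Integrable.mono' ((integrable_min_one_norm hν).const_mul (2 * (1 + ‖ξ‖)))
    ?_ (ae_of_all _ fun z => ?_)
  · refine (continuous_const.sub (Complex.continuous_exp.comp
      (continuous_const.mul (Complex.continuous_ofReal.comp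
        ((continuous_inner (𝕜 := ℝ)).comp (Continuous.prodMk_right ξ)))))).aestronglyMeasurable
  · set t : ℝ := (inner ℝ ξ z : ℝ) with ht
    have key : ‖1 - Complex.exp (Complex.I * (t:ℂ))‖ ≤ 2 * min 1 |t| := by
      rcases le_total |t| 1 with h | h
      · have := Complex.norm_exp_sub_one_le (x := Complex.I * (t:ℂ)) (by simpa using h)
        rw [min_eq_right h]
        calc ‖1 - Complex.exp (Complex.I * (t:ℂ))‖
            = ‖Complex.exp (Complex.I * (t:ℂ)) - 1‖ := by
              rw [norm_sub_rev]
          _ ≤ 2 * ‖Complex.I * (t:ℂ)‖ := this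
          _ = 2 * |t| := by simp
      · rw [min_eq_left h]
        calc ‖1 - Complex.exp (Complex.I * (t:ℂ))‖
            ≤ ‖(1:ℂ)‖ + ‖Complex.exp (Complex.I * (t:ℂ))‖ := norm_sub_le _ _
          _ ≤ 1 + 1 := by
              simp [mul_comm Complex.I (t:ℂ), Complex.norm_exp_ofReal_mul_I]
          _ = 2 * 1 := by norm_num
    refine le_trans key ?_
    have h2 : |t| ≤ ‖ξ‖ * ‖z‖ := abs_real_inner_le_norm ξ z
    rcases le_total (1:ℝ) ‖z‖ with hz | hz
    · rw [min_eq_left hz]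
      have : min 1 |t| ≤ 1 := min_le_left _ _
      nlinarith [norm_nonneg ξ]
    · rw [min_eq_right hz]
      have : min 1 |t| ≤ ‖ξ‖ * ‖z‖ := le_trans (min_le_right _ _) h2
      nlinarith [norm_nonneg z, norm_nonneg ξ, min_le_left (1:ℝ) |t|,
        le_min zero_le_one (abs_nonneg t)]

lemma psi_re (hν : LevyMeasure ν) (ξ : Rd d) :
    (psiSymb ν ξ).re = ∫ z, (1 - Real.cos (inner ℝ ξ z : ℝ)) ∂ν := by
  rw [psiSymb, ← RCLike.re_to_complex, ← integral_re (integrable_one_sub_cexp hν ξ)]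
  congr 1
  funext z
  simp only [RCLike.re_to_complex]
  rw [Complex.sub_re, Complex.one_re, mul_comm Complex.I, Complex.exp_ofReal_mul_I_re]


lemma zero_mem_psiSet {r : ℝ} (hr : 0 ≤ r) :
    (0:ℝ) ∈ {u | ∃ ξ : Rd d, ‖ξ‖ ≤ r ∧ u = (psiSymb ν ξ).re} := by
  refine ⟨0, by simpa using hr, ?_⟩
  simp [psiSymb]

lemma psiSet_bddAbove (hν : LevyMeasure ν) {r : ℝ} (hr : 0 ≤ r) :
    BddAbove {u | ∃ ξ : Rd d, ‖ξ‖ ≤ r ∧ u = (psiSymb ν ξ).re} := by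
  refine ⟨(2 + r) * ∫ z, min 1 ‖z‖ ∂ν, ?_⟩
  rintro u ⟨ξ, hξ, rfl⟩
  rw [psi_re hν ξ, ← MeasureTheory.integral_const_mul]
  refine integral_mono (integrable_one_sub_cos hν ξ)
    ((integrable_min_one_norm hν).const_mul _) (fun z => ?_)
  exact le_trans (le_abs_self _) (abs_one_sub_cos_inner_le hr ξ z hξ)

lemma psiStar_nonneg (hν : LevyMeasure ν) {r : ℝ} (hr : 0 ≤ r) : 0 ≤ psiStar ν r :=
  le_csSup (psiSet_bddAbove hν hr) (zero_mem_psiSet hr)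

lemma psiStar_le_hFn (hν : LevyMeasure ν) {r : ℝ} (hr : 0 < r) :
    psiStar ν r ≤ 2 * hFn ν (1/r) := by
  rw [psiStar]
  refine csSup_le ⟨0, zero_mem_psiSet hr.le⟩ ?_
  rintro u ⟨ξ, hξ, rfl⟩
  rw [psi_re hν ξ, hFn, ← MeasureTheory.integral_const_mul]
  refine integral_mono (integrable_one_sub_cos hν ξ)
    ((integrable_hInt hν (by positivity : (0:ℝ) < 1/r)).const_mul 2) (fun z => ?_)
  refine le_trans (one_sub_cos_le_two_min (inner ℝ ξ z : ℝ)) ?_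
  have habs := abs_real_inner_le_norm ξ z
  have h2 : (inner ℝ ξ z : ℝ)^2 ≤ ‖ξ‖^2 * ‖z‖^2 := by
    nlinarith [abs_nonneg (inner ℝ ξ z : ℝ), sq_abs (inner ℝ ξ z : ℝ), norm_nonneg ξ, norm_nonneg z]
  have h3 : ‖ξ‖^2 * ‖z‖^2 ≤ ‖z‖^2/(1/r)^2 := by
    have heq : ‖z‖^2/(1/r)^2 = ‖z‖^2 * r^2 := by field_simp
    rw [heq]
    nlinarith [pow_le_pow_left₀ (norm_nonneg ξ) hξ 2, sq_nonneg ‖z‖]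
  exact mul_le_mul_of_nonneg_left (min_le_min le_rfl (h2.trans h3)) (by norm_num)

set_option maxHeartbeats 1000000 in
lemma hFn_le_psiStar (hd : 1 ≤ d) (hν : LevyMeasure ν) {r : ℝ} (hr : 0 < r) :
    hFn ν (1/r) ≤ 10 * d * psiStar ν r := by
  haveI := levy_sigmaFinite hν
  have hd0 : (0:ℝ) < d := by exact_mod_cast Nat.lt_of_lt_of_le Nat.zero_lt_one hd
  set a : ℝ := r / Real.sqrt d with ha_def
  have hsq : (0:ℝ) < Real.sqrt d := Real.sqrt_pos.2 hd0
  have ha : 0 < a := div_pos hr hsq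
  have ha2 : a^2 = r^2 / d := by
    rw [ha_def, div_pow, Real.sq_sqrt hd0.le]
  set e := (MeasurableEquiv.toLp 2 (Fin d → ℝ)).symm with he_def
  set Q : Set (Fin d → ℝ) := Set.univ.pi (fun _ => Set.Icc (-a) a) with hQ_def
  have hQm : MeasurableSet Q := MeasurableSet.univ_pi (fun _ => measurableSet_Icc)
  set Cs : Set (Rd d) := ⇑e ⁻¹' Q with hCs_def
  have hCm : MeasurableSet Cs := hQm.preimage e.measurable
  have hmp : MeasurePreserving e volume volume :=
    EuclideanSpace.volume_preserving_symm_measurableEquiv_toLp (Fin d)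
  have hvolQ : volume Q = ENNReal.ofReal (2*a) ^ d := by
    rw [hQ_def, volume_pi_pi]
    simp [Real.volume_Icc, show ∀ (x:ℝ), x - -x = 2*x from fun x => by ring]
  have hvolC : volume Cs = ENNReal.ofReal (2*a) ^ d := by
    rw [hCs_def, hmp.measure_preimage hQm.nullMeasurableSet, hvolQ]
  set V : ℝ := (2*a)^d with hV_def
  have hVpos : 0 < V := by positivity
  have hvolCtoReal : (volume Cs).toReal = V := by
    rw [hvolC, ← ENNReal.ofReal_pow (by linarith)]
    exact ENNReal.toReal_ofReal (by positivity)
  have hμfin : volume Cs ≠ ∞ := by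
    rw [hvolC]; exact (ENNReal.pow_lt_top ENNReal.ofReal_lt_top).ne
  have hμ0 : volume Cs ≠ 0 := by
    rw [hvolC]
    exact pow_ne_zero _ (by simp [ENNReal.ofReal_eq_zero, not_le]; linarith)
  set μ := volume.restrict Cs with hμ_def
  haveI : IsFiniteMeasure μ := ⟨by
    rw [hμ_def, Measure.restrict_apply_univ]; exact hμfin.lt_top⟩
  have hmem : ∀ ξ : Rd d, ξ ∈ Cs ↔ ∀ j, ξ j ∈ Set.Icc (-a) a := by
    intro ξ
    rw [hCs_def, Set.mem_preimage, hQ_def, Set.mem_univ_pi]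
    exact Iff.rfl
  have hnorm_le : ∀ ξ ∈ Cs, ‖ξ‖ ≤ r := by
    intro ξ hξ
    rw [EuclideanSpace.norm_eq]
    have hb : ∀ j, ‖ξ j‖^2 ≤ a^2 := by
      intro j
      obtain ⟨h1, h2⟩ := (hmem ξ).1 hξ j
      rw [Real.norm_eq_abs, sq_abs]
      nlinarith
    have hsum : ∑ j, ‖ξ j‖^2 ≤ r^2 := by
      calc ∑ j, ‖ξ j‖^2 ≤ ∑ _j : Fin d, a^2 := Finset.sum_le_sum (fun j _ => hb j)
        _ = d * a^2 := by rw [Finset.sum_const, Finset.card_univ, Fintype.card_fin,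
              nsmul_eq_mul]
        _ = r^2 := by rw [ha2]; field_simp
    calc Real.sqrt (∑ j, ‖ξ j‖^2) ≤ Real.sqrt (r^2) :=
          Real.sqrt_le_sqrt hsum
      _ = r := Real.sqrt_sq hr.le
  have hinner : ∀ (ξ z : Rd d), (inner ℝ ξ z : ℝ) = ∑ j, ξ j * z j := by
    intro ξ z
    rw [PiLp.inner_apply]
    simp [RCLike.inner_apply, conj_trivial]
    exact Finset.sum_congr rfl (fun j _ => mul_comm _ _)
  -- integrability on the product
  have hae1 : ∀ᵐ p ∂(μ.prod ν), p.1 ∈ Cs := by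
    rw [ae_iff]
    have hset : {p : Rd d × Rd d | ¬ p.1 ∈ Cs} = (Csᶜ) ×ˢ Set.univ := by
      ext p; simp
    rw [hset, Measure.prod_prod, hμ_def, Measure.restrict_apply hCm.compl]
    simp
  have hFint : Integrable (fun p : Rd d × Rd d => 1 - Real.cos (inner ℝ p.1 p.2 : ℝ)) (μ.prod ν) := by
    refine Integrable.mono'
      ((integrable_const (2+r)).mul_prod (integrable_min_one_norm hν)) ?_ ?_
    · exact (continuous_const.sub (Real.continuous_cos.comp
        (continuous_inner (𝕜 := ℝ)))).aestronglyMeasurable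
    · filter_upwards [hae1] with p hp
      rw [Real.norm_eq_abs]
      exact abs_one_sub_cos_inner_le hr.le p.1 p.2 (hnorm_le p.1 hp)
  -- pointwise evaluation of the inner ℝ ξ-integral of the cosine
  have hPz : ∀ z : Rd d, ∫ ξ, Real.cos (inner ℝ ξ z : ℝ) ∂μ = ∏ j, lineVal a (z j) := by
    intro z
    have hintc : Integrable (fun ξ : Rd d =>
        Complex.exp (Complex.I * ((inner ℝ ξ z : ℝ):ℂ))) μ := by
      refine Integrable.mono' (integrable_const 1) ?_ (ae_of_all _ fun ξ => ?_)
      · exact (Complex.continuous_exp.comp (continuous_const.mul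
          (Complex.continuous_ofReal.comp (Continuous.inner continuous_id
            continuous_const)))).aestronglyMeasurable
      · rw [mul_comm Complex.I, Complex.norm_exp_ofReal_mul_I]
    have hre : ∫ ξ, Real.cos (inner ℝ ξ z : ℝ) ∂μ
        = (∫ ξ, Complex.exp (Complex.I * ((inner ℝ ξ z : ℝ):ℂ)) ∂μ).re := by
      rw [← RCLike.re_to_complex, ← integral_re hintc]
      congr 1
      funext ξ
      simp only [RCLike.re_to_complex]
      rw [mul_comm Complex.I, Complex.exp_ofReal_mul_I_re]
    have htrans : ∫ ξ, Complex.exp (Complex.I * ((inner ℝ ξ z : ℝ):ℂ)) ∂μ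
        = ∫ x in Q, Complex.exp (Complex.I * ((∑ j, x j * z j : ℝ):ℂ)) ∂volume := by
      rw [hμ_def, hCs_def]
      rw [← hmp.setIntegral_preimage_emb e.measurableEmbedding
        (fun x => Complex.exp (Complex.I * ((∑ j, x j * z j : ℝ):ℂ))) Q]
      congr 1
      funext ξ
      rw [hinner]
      rfl
    have hprod : ∫ x in Q, Complex.exp (Complex.I * ((∑ j, x j * z j : ℝ):ℂ)) ∂volume
        = ∏ j, ((lineVal a (z j) : ℝ):ℂ) := by
      rw [← MeasureTheory.integral_indicator hQm]
      have hind : Q.indicator (fun x => Complex.exp (Complex.I * ((∑ j, x j * z j : ℝ):ℂ)))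
          = fun x => ∏ j, (Set.Icc (-a) a).indicator
            (fun t => Complex.exp (Complex.I * ((t * z j : ℝ):ℂ))) (x j) := by
        funext x
        by_cases hx : x ∈ Q
        · rw [Set.indicator_of_mem hx]
          have hxj : ∀ j, x j ∈ Set.Icc (-a) a := (Set.mem_univ_pi).1 hx
          rw [Finset.prod_congr rfl (fun j _ => Set.indicator_of_mem (hxj j) _)]
          rw [← Complex.exp_sum]
          congr 1
          push_cast
          rw [Finset.mul_sum]
        · rw [Set.indicator_of_notMem hx]
          obtain ⟨j, _, hj⟩ : ∃ j, j ∈ Finset.univ ∧ x j ∉ Set.Icc (-a) a := by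
            rcases (not_forall.1 (fun hall => hx ((Set.mem_univ_pi).2 (fun j => hall j)))) with ⟨j, hj⟩
            exact ⟨j, Finset.mem_univ j, hj⟩
          exact (Finset.prod_eq_zero (Finset.mem_univ j)
            (Set.indicator_of_notMem hj _)).symm
      rw [hind]
      beta_reduce
      rw [MeasureTheory.volume_pi]
      rw [MeasureTheory.integral_fintype_prod_eq_prod
        (fun j t => (Set.Icc (-a) a).indicator
          (fun u => Complex.exp (Complex.I * ((u * z j : ℝ):ℂ))) t)]
      refine Finset.prod_congr rfl (fun j _ => ?_)
      rw [MeasureTheory.integral_indicator measurableSet_Icc, integral_Icc_cexp ha]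
    rw [hre, htrans, hprod, ← Complex.ofReal_prod, Complex.ofReal_re]
  -- pointwise bound on the product
  have hPbound : ∀ z : Rd d, ∏ j, lineVal a (z j)
      ≤ V * Real.exp (-(min (a^2*‖z‖^2) 1)/9) := by
    intro z
    have hnz : ‖z‖^2 = ∑ j, (z j)^2 := by
      rw [EuclideanSpace.norm_eq, Real.sq_sqrt (by positivity)]
      refine Finset.sum_congr rfl (fun j _ => by rw [Real.norm_eq_abs, sq_abs])
    calc ∏ j, lineVal a (z j) ≤ |∏ j, lineVal a (z j)| := le_abs_self _
      _ = ∏ j, |lineVal a (z j)| := by rw [Finset.abs_prod]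
      _ ≤ ∏ j, (2*a*Real.exp (-(min ((a*z j)^2) 1)/9)) :=
          Finset.prod_le_prod (fun j _ => abs_nonneg _) (fun j _ => abs_lineVal_le ha _)
      _ = V * Real.exp (∑ j, -(min ((a*z j)^2) 1)/9) := by
          rw [Finset.prod_mul_distrib, Finset.prod_const, Finset.card_univ, Fintype.card_fin,
            ← Real.exp_sum]
      _ ≤ V * Real.exp (-(min (a^2*‖z‖^2) 1)/9) := by
          refine mul_le_mul_of_nonneg_left (Real.exp_le_exp.2 ?_) hVpos.le
          have hmins : min (a^2*‖z‖^2) 1 ≤ ∑ j, min ((a*z j)^2) 1 := by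
            by_cases hcase : ∀ j, (a * z j)^2 ≤ 1
            · have heq : ∑ j, min ((a*z j)^2) 1 = ∑ j, (a*z j)^2 :=
                Finset.sum_congr rfl (fun j _ => min_eq_left (hcase j))
              rw [heq]
              refine le_trans (min_le_left _ _) (le_of_eq ?_)
              rw [hnz, Finset.mul_sum]
              exact Finset.sum_congr rfl (fun j _ => by ring)
            · push_neg at hcase
              obtain ⟨j, hj⟩ := hcase
              refine le_trans (min_le_right _ _) ?_
              refine le_trans ?_ (Finset.single_le_sum
                (fun i _ => le_min (sq_nonneg _) zero_le_one) (Finset.mem_univ j))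
              rw [min_eq_right hj.le]
          have h9 : min (a^2*‖z‖^2) 1 / 9 ≤ (∑ j, min ((a*z j)^2) 1) / 9 := by linarith
          calc ∑ j, -(min ((a*z j)^2) 1)/9
              = -((∑ j, min ((a*z j)^2) 1)/9) := by
                rw [← Finset.sum_div, Finset.sum_neg_distrib, neg_div]
            _ ≤ -(min (a^2*‖z‖^2) 1/9) := by linarith
            _ = -(min (a^2*‖z‖^2) 1)/9 := by rw [neg_div]
  -- the lower bound for the inner integral
  have hlow : ∀ z : Rd d, V/(10*d) * min 1 (‖z‖^2/(1/r)^2)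
      ≤ V - ∏ j, lineVal a (z j) := by
    intro z
    set m : ℝ := min (a^2*‖z‖^2) 1 with hm_def
    have hm0 : 0 ≤ m := le_min (by positivity) zero_le_one
    have hm1 : m ≤ 1 := min_le_right _ _
    have hexp : Real.exp (-(m/9)) * (1 + m/9) ≤ 1 := by
      have h1 : (1 + m/9) ≤ Real.exp (m/9) := by
        have := Real.add_one_le_exp (m/9); linarith
      calc Real.exp (-(m/9)) * (1 + m/9) ≤ Real.exp (-(m/9)) * Real.exp (m/9) :=
            mul_le_mul_of_nonneg_left h1 (Real.exp_pos _).le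
        _ = 1 := by rw [← Real.exp_add]; simp
    have hkey : m/10 ≤ 1 - Real.exp (-(m/9)) := by
      nlinarith [Real.exp_pos (-(m/9)), hexp, hm0, hm1]
    have hd_m : min 1 (‖z‖^2/(1/r)^2) ≤ d * m := by
      have hrz : ‖z‖^2/(1/r)^2 = r^2*‖z‖^2 := by field_simp
      rw [hrz, hm_def, ha2]
      have hd1 : (1:ℝ) ≤ d := by exact_mod_cast hd
      rcases le_total 1 (r^2/d*‖z‖^2) with hc | hc
      · rw [min_eq_right hc]
        calc min 1 (r^2*‖z‖^2) ≤ 1 := min_le_left _ _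
          _ ≤ d * 1 := by nlinarith
      · rw [min_eq_left hc]
        calc min 1 (r^2*‖z‖^2) ≤ r^2*‖z‖^2 := min_le_right _ _
          _ = d * (r^2/d*‖z‖^2) := by
              rw [show (d:ℝ) * (r^2/(d:ℝ)*‖z‖^2) = r^2*‖z‖^2 * ((d:ℝ)/(d:ℝ)) from by ring,
                div_self (ne_of_gt hd0), mul_one]
    have hfinal : V/(10*d) * min 1 (‖z‖^2/(1/r)^2) ≤ V * (m/10) := by
      have h1 : V/(10*d) * min 1 (‖z‖^2/(1/r)^2) ≤ V/(10*d) * (d*m) :=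
        mul_le_mul_of_nonneg_left hd_m (by positivity)
      have h2 : V/(10*d) * (d*m) = V * (m/10) := by field_simp
      linarith
    have h3 : V * (m/10) ≤ V * (1 - Real.exp (-(m/9))) :=
      mul_le_mul_of_nonneg_left hkey hVpos.le
    have h4 : V - V * Real.exp (-(m/9)) ≤ V - ∏ j, lineVal a (z j) := by
      have := hPbound z
      have heq : V * Real.exp (-(min (a^2*‖z‖^2) 1)/9) = V * Real.exp (-(m/9)) := by
        rw [hm_def, neg_div]
      linarith [heq ▸ this]
    nlinarith [h3, h4, hfinal]
  -- swap and bound the double integral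
  set g : Rd d → ℝ := fun ξ => ∫ z, (1 - Real.cos (inner ℝ ξ z : ℝ)) ∂ν with hg_def
  have hgint : Integrable g μ := hFint.integral_prod_left
  have hswap : ∫ ξ, g ξ ∂μ = ∫ z, (∫ ξ, (1 - Real.cos (inner ℝ ξ z : ℝ)) ∂μ) ∂ν :=
    integral_integral_swap hFint
  have hinner_int : ∀ z : Rd d, Integrable (fun ξ : Rd d => Real.cos (inner ℝ ξ z : ℝ)) μ := by
    intro z
    refine Integrable.mono' (integrable_const 1) ?_ (ae_of_all _ fun ξ => ?_)
    · exact (Real.continuous_cos.comp (Continuous.inner continuous_id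
        continuous_const)).aestronglyMeasurable
    · rw [Real.norm_eq_abs]; exact Real.abs_cos_le_one _
  have hinner_eval : ∀ z : Rd d, ∫ ξ, (1 - Real.cos (inner ℝ ξ z : ℝ)) ∂μ
      = V - ∏ j, lineVal a (z j) := by
    intro z
    rw [integral_sub (integrable_const 1) (hinner_int z), integral_const, hPz z]
    rw [hμ_def, Measure.real, Measure.restrict_apply_univ, hvolCtoReal]
    simp
  have hint_ge : (V/(10*d)) * hFn ν (1/r) ≤ ∫ ξ, g ξ ∂μ := by
    rw [hswap, hFn, ← MeasureTheory.integral_const_mul]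
    refine integral_mono ((integrable_hInt hν (by positivity : (0:ℝ) < 1/r)).const_mul _)
      hFint.integral_prod_right (fun z => ?_)
    rw [hinner_eval z]
    exact hlow z
  -- first moment
  obtain ⟨ξ₀, hξ₀C, hξ₀⟩ := exists_setAverage_le hμ0 hμfin (hgint : IntegrableOn g Cs volume)
  have havg : (volume Cs).toReal⁻¹ * ∫ ξ in Cs, g ξ ∂volume ≤ g ξ₀ := by
    rw [setAverage_eq (μ := volume) g Cs] at hξ₀
    simpa [smul_eq_mul, Measure.real] using hξ₀
  have hg0 : hFn ν (1/r) / (10*d) ≤ g ξ₀ := by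
    have h1 : (V/(10*d)) * hFn ν (1/r) ≤ ∫ ξ in Cs, g ξ ∂volume := hint_ge
    have h2 : hFn ν (1/r) / (10*d) = V⁻¹ * ((V/(10*d)) * hFn ν (1/r)) := by
      field_simp
    rw [h2]
    refine le_trans ?_ havg
    rw [hvolCtoReal]
    exact mul_le_mul_of_nonneg_left h1 (by positivity)
  have hgle : g ξ₀ ≤ psiStar ν r := by
    have hmem0 : g ξ₀ ∈ {u | ∃ ξ : Rd d, ‖ξ‖ ≤ r ∧ u = (psiSymb ν ξ).re} :=
      ⟨ξ₀, hnorm_le ξ₀ hξ₀C, (psi_re hν ξ₀).symm⟩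
    exact le_csSup (psiSet_bddAbove hν hr.le) hmem0
  have h10d : (0:ℝ) < 10*d := by positivity
  rw [div_le_iff₀ h10d] at hg0
  calc hFn ν (1/r) ≤ g ξ₀ * (10*d) := le_trans hg0 (le_refl _)
    _ ≤ psiStar ν r * (10*d) := mul_le_mul_of_nonneg_right hgle (by positivity)
    _ = 10 * d * psiStar ν r := by ring

end Stmt1Aux

/-- If `h(λr) ≤ C λ^{-α} h(r)` for all `λ ∈ (0,1]` and `r > 0` with `θ₀ r < 1`
(all `r > 0` if `θ₀ = 0`), then `ψ* ∈ WUSC(α, θ₀, 16(1+2d) C)`. -/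
theorem stmt1 {d : ℕ} (hd : 1 ≤ d) (ν : Measure (Rd d)) (hν : LevyMeasure ν)
    (α C θ₀ : ℝ) (hα : α ∈ Set.Ioc (0 : ℝ) 2) (hC : 0 < C) (hθ₀ : 0 ≤ θ₀)
    (hh : ∀ lam : ℝ, 0 < lam → lam ≤ 1 → ∀ r : ℝ, 0 < r → θ₀ * r < 1 →
      hFn ν (lam * r) ≤ C * lam ^ (-α) * hFn ν r) :
    WUSC α θ₀ (16 * (1 + 2 * (d : ℝ)) * C) (psiStar ν) := by
  intro lam hlam θ hθ
  have hθ0 : 0 < θ := lt_of_le_of_lt hθ₀ hθ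
  have hlam0 : (0:ℝ) < lam := lt_of_lt_of_le one_pos hlam
  have hlθ : 0 < lam * θ := mul_pos hlam0 hθ0
  have h1 : psiStar ν (lam*θ) ≤ 2 * hFn ν (1/(lam*θ)) := Stmt1Aux.psiStar_le_hFn hν hlθ
  have h2 : hFn ν (1/(lam*θ)) ≤ C * lam ^ α * hFn ν (1/θ) := by
    have hcond : θ₀ * θ⁻¹ < 1 := by
      have := mul_lt_mul_of_pos_right hθ (inv_pos.2 hθ0)
      rwa [mul_inv_cancel₀ (ne_of_gt hθ0)] at this
    have key := hh lam⁻¹ (by positivity) ((inv_le_one₀ hlam0).2 hlam) θ⁻¹ (by positivity) hcond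
    have hrw1 : (1:ℝ)/(lam*θ) = lam⁻¹ * θ⁻¹ := by rw [one_div, mul_inv]
    have hrw2 : (lam⁻¹) ^ (-α) = lam ^ α := by
      rw [Real.inv_rpow hlam0.le, Real.rpow_neg hlam0.le, inv_inv]
    rw [hrw2, ← hrw1, show θ⁻¹ = 1/θ from (one_div θ).symm] at key
    exact key
  have h3 : hFn ν (1/θ) ≤ 10 * d * psiStar ν θ := Stmt1Aux.hFn_le_psiStar hd hν hθ0
  have hψ : 0 ≤ psiStar ν θ := Stmt1Aux.psiStar_nonneg hν hθ0.le
  have hpow : 0 ≤ lam ^ α := Real.rpow_nonneg hlam0.le α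
  have hd1 : (1:ℝ) ≤ d := by exact_mod_cast hd
  calc psiStar ν (lam*θ) ≤ 2 * hFn ν (1/(lam*θ)) := h1
    _ ≤ 2 * (C * lam ^ α * hFn ν (1/θ)) := by linarith
    _ ≤ 2 * (C * lam ^ α * (10 * d * psiStar ν θ)) := by
        have hCp : 0 ≤ C * lam ^ α := by positivity
        nlinarith [mul_le_mul_of_nonneg_left h3 hCp]
    _ = 20 * d * C * (lam ^ α * psiStar ν θ) := by ring
    _ ≤ 16 * (1 + 2 * (d:ℝ)) * C * lam ^ α * psiStar ν θ := by
        have hx : 0 ≤ lam ^ α * psiStar ν θ := mul_nonneg hpow hψ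
        nlinarith [mul_nonneg (mul_nonneg (show (0:ℝ) ≤ 16 + 12*(d:ℝ) by linarith) hC.le) hx]
end
end

section
/- Let α ∈ (0,2], C > 0 and θ₀ ∈ [0,1). Assume h(λr) ≤ C λ^{−α} h(r) for all λ ∈ (0,1] and all r > 0 with r < 1/θ₀. Then for every ε > 0, ∫_{|y|<1} |y|^{α+ε} ν(dy) ≤ C (α+ε) ε^{−1} h(1) < ∞. -/
open MeasureTheory Real Filter Topology
open scoped ENNReal NNReal

noncomputable section

/-- Under the scaling of `h`, for every `ε > 0`,
`∫_{|y|<1} |y|^{α+ε} ν(dy) ≤ C (α+ε) ε⁻¹ h(1) < ∞`. -/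
theorem stmt2 {d : ℕ} (hd : 1 ≤ d) (ν : Measure (Rd d)) (hν : LevyMeasure ν)
    (α C θ₀ : ℝ) (hα : α ∈ Set.Ioc (0 : ℝ) 2) (hC : 0 < C) (hθ₀ : θ₀ ∈ Set.Ico (0 : ℝ) 1)
    (hh : ∀ lam : ℝ, 0 < lam → lam ≤ 1 → ∀ r : ℝ, 0 < r → θ₀ * r < 1 →
      hFn ν (lam * r) ≤ C * lam ^ (-α) * hFn ν r)
    (ε : ℝ) (hε : 0 < ε) :
    (∫⁻ y in {y : Rd d | ‖y‖ < 1}, ENNReal.ofReal (‖y‖ ^ (α + ε)) ∂ν)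
      ≤ ENNReal.ofReal (C * (α + ε) / ε * hFn ν 1) := by
  obtain ⟨hα0, hα2⟩ := hα
  set p : ℝ := α + ε with hpdef
  have hp0 : 0 < p := by positivity
  -- the lintegral version of h
  set H : ℝ → ℝ≥0∞ := fun r => ∫⁻ x, ENNReal.ofReal (min 1 (‖x‖ ^ 2 / r ^ 2)) ∂ν with hHdef
  have gmeas : ∀ r : ℝ, Measurable fun x : Rd d => min 1 (‖x‖ ^ 2 / r ^ 2) := fun r =>
    measurable_const.min ((measurable_norm.pow_const 2).div_const _)
  have gnn : ∀ (r : ℝ) (x : Rd d), 0 ≤ min 1 (‖x‖ ^ 2 / r ^ 2) := fun r x =>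
    le_min zero_le_one (div_nonneg (sq_nonneg _) (sq_nonneg _))
  have hHfin : ∀ r : ℝ, 0 < r → H r < ∞ := by
    intro r hr
    have hle : ∀ x : Rd d, min 1 (‖x‖ ^ 2 / r ^ 2) ≤ max 1 (r ^ 2)⁻¹ * min 1 ‖x‖ := by
      intro x
      have hx : 0 ≤ ‖x‖ := norm_nonneg x
      rcases le_or_gt 1 ‖x‖ with h | h
      · rw [min_eq_left h]
        calc min 1 (‖x‖ ^ 2 / r ^ 2) ≤ 1 := min_le_left _ _
          _ ≤ max 1 (r ^ 2)⁻¹ * 1 := by rw [mul_one]; exact le_max_left _ _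
      · rw [min_eq_right h.le]
        calc min 1 (‖x‖ ^ 2 / r ^ 2) ≤ ‖x‖ ^ 2 / r ^ 2 := min_le_right _ _
          _ = (r ^ 2)⁻¹ * (‖x‖ * ‖x‖) := by ring
          _ ≤ (r ^ 2)⁻¹ * (1 * ‖x‖) := by
              apply mul_le_mul_of_nonneg_left _ (by positivity)
              exact mul_le_mul_of_nonneg_right h.le hx
          _ ≤ max 1 (r ^ 2)⁻¹ * ‖x‖ := by
              rw [one_mul]; exact mul_le_mul_of_nonneg_right (le_max_right _ _) hx
    calc H r ≤ ∫⁻ x, ENNReal.ofReal (max 1 (r ^ 2)⁻¹ * min 1 ‖x‖) ∂ν :=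
          lintegral_mono fun x => ENNReal.ofReal_le_ofReal (hle x)
      _ = ENNReal.ofReal (max 1 (r ^ 2)⁻¹) * ∫⁻ x, ENNReal.ofReal (min 1 ‖x‖) ∂ν := by
          simp_rw [ENNReal.ofReal_mul (le_trans zero_le_one (le_max_left _ _))]
          exact lintegral_const_mul' _ _ ENNReal.ofReal_ne_top
      _ < ∞ := ENNReal.mul_lt_top ENNReal.ofReal_lt_top hν.2
  have hHeq : ∀ r : ℝ, 0 < r → ENNReal.ofReal (hFn ν r) = H r := by
    intro r hr
    have : hFn ν r = (H r).toReal := by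
      rw [hFn, integral_eq_lintegral_of_nonneg_ae (Eventually.of_forall (gnn r))
        (gmeas r).aestronglyMeasurable]
    rw [this, ENNReal.ofReal_toReal (hHfin r hr).ne]
  have hFn_nn : ∀ r : ℝ, 0 ≤ hFn ν r := fun r =>
    integral_nonneg (gnn r)
  -- tail bound : ν {‖y‖ > t} ≤ H t
  have tailmeas : ∀ t : ℝ, MeasurableSet {y : Rd d | t < ‖y‖} := fun t =>
    measurableSet_lt measurable_const measurable_norm
  have tail : ∀ t : ℝ, 0 < t → ν {y : Rd d | t < ‖y‖} ≤ H t := by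
    intro t ht
    rw [← lintegral_indicator_one (tailmeas t)]
    apply lintegral_mono
    intro x
    by_cases hx : t < ‖x‖
    · have h1 : (1 : ℝ) ≤ ‖x‖ ^ 2 / t ^ 2 := by
        rw [le_div_iff₀ (by positivity)]
        nlinarith [norm_nonneg x]
      rw [Set.indicator_of_mem (show x ∈ {y : Rd d | t < ‖y‖} from hx)]
      show (1 : ℝ≥0∞) ≤ ENNReal.ofReal (min 1 (‖x‖ ^ 2 / t ^ 2))
      rw [min_eq_left h1]
      simp
    · rw [Set.indicator_of_notMem (show x ∉ {y : Rd d | t < ‖y‖} from hx)]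
      exact zero_le
  -- scaling
  have scale : ∀ t : ℝ, 0 < t → t < 1 → H t ≤ ENNReal.ofReal (C * t ^ (-α)) * H 1 := by
    intro t ht ht1
    have := hh t ht ht1.le 1 one_pos (by rw [mul_one]; exact hθ₀.2)
    rw [mul_one] at this
    calc H t = ENNReal.ofReal (hFn ν t) := (hHeq t ht).symm
      _ ≤ ENNReal.ofReal (C * t ^ (-α) * hFn ν 1) := ENNReal.ofReal_le_ofReal this
      _ = ENNReal.ofReal (C * t ^ (-α)) * ENNReal.ofReal (hFn ν 1) :=
          ENNReal.ofReal_mul (by positivity)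
      _ = ENNReal.ofReal (C * t ^ (-α)) * H 1 := by rw [hHeq 1 one_pos]
  -- layer cake
  set μ : Measure (Rd d) := ν.restrict {y : Rd d | ‖y‖ < 1} with hμdef
  have key := lintegral_rpow_eq_lintegral_meas_lt_mul μ
    (Eventually.of_forall fun y : Rd d => norm_nonneg y)
    measurable_norm.aemeasurable hp0
  rw [key]
  -- bound the inner integral
  have inner_bd : (∫⁻ t in Set.Ioi (0:ℝ), μ {a : Rd d | t < ‖a‖} * ENNReal.ofReal (t ^ (p - 1)))
      ≤ ENNReal.ofReal (C * hFn ν 1) * ENNReal.ofReal (1 / ε) := by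
    have step1 : (∫⁻ t in Set.Ioi (0:ℝ), μ {a : Rd d | t < ‖a‖} * ENNReal.ofReal (t ^ (p - 1)))
        ≤ ∫⁻ t in Set.Ioi (0:ℝ),
            (Set.Ioo (0:ℝ) 1).indicator
              (fun t => ENNReal.ofReal (C * hFn ν 1) * ENNReal.ofReal (t ^ (ε - 1))) t := by
      apply setLIntegral_mono' measurableSet_Ioi
      intro t ht
      replace ht : 0 < t := ht
      rcases lt_or_ge t 1 with h1 | h1
      · rw [Set.indicator_of_mem (Set.mem_Ioo.2 ⟨ht, h1⟩)]
        have hμle : μ {a : Rd d | t < ‖a‖} ≤ H t := by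
          calc μ {a : Rd d | t < ‖a‖}
              = ν ({a : Rd d | t < ‖a‖} ∩ {y : Rd d | ‖y‖ < 1}) :=
                Measure.restrict_apply (tailmeas t)
            _ ≤ ν {a : Rd d | t < ‖a‖} := measure_mono Set.inter_subset_left
            _ ≤ H t := tail t ht
        calc μ {a : Rd d | t < ‖a‖} * ENNReal.ofReal (t ^ (p - 1))
            ≤ ENNReal.ofReal (C * t ^ (-α)) * H 1 * ENNReal.ofReal (t ^ (p - 1)) :=
              mul_le_mul_left (hμle.trans (scale t ht h1)) _
          _ = ENNReal.ofReal (C * t ^ (-α)) * ENNReal.ofReal (hFn ν 1)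
                * ENNReal.ofReal (t ^ (p - 1)) := by rw [hHeq 1 one_pos]
          _ = ENNReal.ofReal (C * t ^ (-α) * hFn ν 1 * t ^ (p - 1)) := by
              rw [← ENNReal.ofReal_mul (mul_nonneg hC.le (Real.rpow_nonneg ht.le _)),
                ← ENNReal.ofReal_mul
                  (mul_nonneg (mul_nonneg hC.le (Real.rpow_nonneg ht.le _)) (hFn_nn 1))]
          _ = ENNReal.ofReal (C * hFn ν 1 * t ^ (ε - 1)) := by
              congr 1
              have : t ^ (-α) * t ^ (p - 1) = t ^ (ε - 1) := by
                rw [← Real.rpow_add ht]; congr 1; rw [hpdef]; ring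
              calc C * t ^ (-α) * hFn ν 1 * t ^ (p - 1)
                  = C * hFn ν 1 * (t ^ (-α) * t ^ (p - 1)) := by ring
                _ = C * hFn ν 1 * t ^ (ε - 1) := by rw [this]
          _ = ENNReal.ofReal (C * hFn ν 1) * ENNReal.ofReal (t ^ (ε - 1)) :=
              ENNReal.ofReal_mul (mul_nonneg hC.le (hFn_nn 1))
      · have hempty : μ {a : Rd d | t < ‖a‖} = 0 := by
          rw [hμdef, Measure.restrict_apply (tailmeas t)]
          have hset : {a : Rd d | t < ‖a‖} ∩ {y : Rd d | ‖y‖ < 1} = ∅ := by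
            ext a
            simp only [Set.mem_inter_iff, Set.mem_setOf_eq, Set.mem_empty_iff_false, iff_false]
            rintro ⟨h2, h3⟩
            linarith
          rw [hset, measure_empty]
        rw [hempty, zero_mul]
        exact zero_le
    have step2 : (∫⁻ t in Set.Ioi (0:ℝ),
        (Set.Ioo (0:ℝ) 1).indicator
          (fun t => ENNReal.ofReal (C * hFn ν 1) * ENNReal.ofReal (t ^ (ε - 1))) t)
        = ENNReal.ofReal (C * hFn ν 1) * ∫⁻ t in Set.Ioo (0:ℝ) 1, ENNReal.ofReal (t ^ (ε - 1)) := by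
      rw [lintegral_indicator measurableSet_Ioo, Measure.restrict_restrict measurableSet_Ioo,
        Set.inter_eq_self_of_subset_left Set.Ioo_subset_Ioi_self,
        lintegral_const_mul' _ _ ENNReal.ofReal_ne_top]
    have step3 : (∫⁻ t in Set.Ioo (0:ℝ) 1, ENNReal.ofReal (t ^ (ε - 1)))
        = ENNReal.ofReal (1 / ε) := by
      have hint : IntegrableOn (fun t : ℝ => t ^ (ε - 1)) (Set.Ioo (0:ℝ) 1) volume := by
        have := (intervalIntegral.intervalIntegrable_rpow'
          (a := 0) (b := 1) (by linarith : (-1:ℝ) < ε - 1)).1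
        exact this.mono_set Set.Ioo_subset_Ioc_self
      rw [← MeasureTheory.ofReal_integral_eq_lintegral_ofReal hint]
      · congr 1
        have h1 : (∫ t in Set.Ioo (0:ℝ) 1, t ^ (ε - 1)) = ∫ t in Set.Ioc (0:ℝ) 1, t ^ (ε - 1) :=
          (MeasureTheory.integral_Ioc_eq_integral_Ioo).symm
        have h2 : (∫ t in Set.Ioc (0:ℝ) 1, t ^ (ε - 1)) = ∫ t in (0:ℝ)..1, t ^ (ε - 1) :=
          (intervalIntegral.integral_of_le (by norm_num)).symm
        rw [h1, h2, integral_rpow (Or.inl (by linarith : (-1:ℝ) < ε - 1))]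
        rw [sub_add_cancel, Real.one_rpow, Real.zero_rpow hε.ne']
        ring
      · filter_upwards [self_mem_ae_restrict (measurableSet_Ioo :
          MeasurableSet (Set.Ioo (0:ℝ) 1))] with t ht
        exact Real.rpow_nonneg ht.1.le _
    calc (∫⁻ t in Set.Ioi (0:ℝ), μ {a : Rd d | t < ‖a‖} * ENNReal.ofReal (t ^ (p - 1)))
        ≤ _ := step1
      _ = ENNReal.ofReal (C * hFn ν 1) * ∫⁻ t in Set.Ioo (0:ℝ) 1,
            ENNReal.ofReal (t ^ (ε - 1)) := step2
      _ = ENNReal.ofReal (C * hFn ν 1) * ENNReal.ofReal (1 / ε) := by rw [step3]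
  calc ENNReal.ofReal p * (∫⁻ t in Set.Ioi (0:ℝ),
        μ {a : Rd d | t < ‖a‖} * ENNReal.ofReal (t ^ (p - 1)))
      ≤ ENNReal.ofReal p * (ENNReal.ofReal (C * hFn ν 1) * ENNReal.ofReal (1 / ε)) :=
        mul_le_mul_right inner_bd _
    _ = ENNReal.ofReal (p * (C * hFn ν 1 * (1 / ε))) := by
        rw [← ENNReal.ofReal_mul (mul_nonneg hC.le (hFn_nn 1)),
          ← ENNReal.ofReal_mul hp0.le]
    _ = ENNReal.ofReal (C * p / ε * hFn ν 1) := by congr 1; field_simp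
end
end
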